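/- Let q ≥ 1 be an integer, let (s_j)_{j=0}^∞ be a Stieltjes positive definite sequence of complex q×q matrices with associated matrix polynomials P_n, Q_n, P̂_n, Q̂_n, and let P_n^{(1)}, Q_n^{(1)}, P̂_n^{(1)}, Q̂_n^{(1)} be the corresponding polynomials built from the first Kátětov transform (s_j^{(1)})_{j=0}^∞. Then for every n ∈ ℕ and every z ∈ ℂ: P_n^{(1)}(z) = s_0^{−1} Q̂_n(z), Q_n^{(1)}(z) = Q̂_n(z) − s_0 P̂_n(z), P̂_{n−1}^{(1)}(z) = s_0^{−1} Q_n(z), and Q̂_{n−1}^{(1)}(z) = z Q_n(z) − s_0 P_n(z). -/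

import Mathlib

open Matrix
open scoped ComplexOrder

noncomputable section

/-- The space of complex `q × q` matrices. -/
abbrev Mq (q : ℕ) := Matrix (Fin q) (Fin q) ℂ

/-- The space of complex `2q × 2q` matrices, written in `q × q` blocks. -/
abbrev M2q (q : ℕ) := Matrix (Fin q ⊕ Fin q) (Fin q ⊕ Fin q) ℂ

/-- Block Hankel matrix `H_n = (s_{j+k})_{j,k=0}^n`. -/
def Hmat (q : ℕ) (s : ℕ → Mq q) (n : ℕ) :
    Matrix (Fin (n + 1) × Fin q) (Fin (n + 1) × Fin q) ℂ :=
  Matrix.of fun p r => s (p.1.1 + r.1.1) p.2 r.2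

/-- Block Hankel matrix `K_n = (s_{j+k+1})_{j,k=0}^n`. -/
def Kmat (q : ℕ) (s : ℕ → Mq q) (n : ℕ) :
    Matrix (Fin (n + 1) × Fin q) (Fin (n + 1) × Fin q) ℂ :=
  Matrix.of fun p r => s (p.1.1 + r.1.1 + 1) p.2 r.2

/-- A sequence of complex `q × q` matrices is Stieltjes positive definite if all the
block Hankel matrices `H_n` and `K_n` are positive definite (in particular Hermitian). -/
def IsStieltjesPD (q : ℕ) (s : ℕ → Mq q) : Prop :=
  ∀ n : ℕ, (Hmat q s n).PosDef ∧ (Kmat q s n).PosDef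

/-- Even Stieltjes parameters `𝔮_{2k}` (Schur complements `L_k`). -/
def qEven (q : ℕ) (s : ℕ → Mq q) : ℕ → Mq q
  | 0 => s 0
  | k + 1 =>
      s (2 * (k + 1)) -
        (Matrix.of fun (a : Fin q) (r : Fin (k + 1) × Fin q) => s (k + 1 + r.1.1) a r.2) *
          (Hmat q s k)⁻¹ *
          (Matrix.of fun (p : Fin (k + 1) × Fin q) (b : Fin q) => s (k + 1 + p.1.1) p.2 b)

/-- Odd Stieltjes parameters `𝔮_{2k+1}` (Schur complements `Λ_k`). -/
def qOdd (q : ℕ) (s : ℕ → Mq q) : ℕ → Mq q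
  | 0 => s 1
  | k + 1 =>
      s (2 * (k + 1) + 1) -
        (Matrix.of fun (a : Fin q) (r : Fin (k + 1) × Fin q) => s (k + 2 + r.1.1) a r.2) *
          (Kmat q s k)⁻¹ *
          (Matrix.of fun (p : Fin (k + 1) × Fin q) (b : Fin q) => s (k + 2 + p.1.1) p.2 b)

/-- Stieltjes parametrization `𝔮_j`. -/
def qpar (q : ℕ) (s : ℕ → Mq q) (j : ℕ) : Mq q :=
  if j % 2 = 0 then qEven q s (j / 2) else qOdd q s (j / 2)

/-- Reciprocal sequence `s^♯`. -/
def reciprocal (q : ℕ) (s : ℕ → Mq q) : ℕ → Mq q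
  | 0 => (s 0)⁻¹
  | j + 1 =>
      -(s 0)⁻¹ *
        ∑ l ∈ (Finset.range (j + 1)).attach, s (j + 1 - l.1) * reciprocal q s l.1
  decreasing_by exact Finset.mem_range.mp l.2

/-- First Kátětov transform `s^{(1)}_j = −s_0 s_{j+1}^♯ s_0`. -/
def katetov1 (q : ℕ) (s : ℕ → Mq q) : ℕ → Mq q :=
  fun j => -(s 0) * reciprocal q s (j + 1) * s 0

/-- `ℓ`-th Kátětov transform (the `ℓ`-fold iterate of the first Kátětov transform). -/
def katetov (q : ℕ) (ℓ : ℕ) (s : ℕ → Mq q) : ℕ → Mq q :=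
  (katetov1 q)^[ℓ] s

/-- `v_k = col(I_q, 0_{kq×q})`. -/
def vcol (q k : ℕ) : Matrix (Fin (k + 1) × Fin q) (Fin q) ℂ :=
  Matrix.of fun p b => if p.1.1 = 0 ∧ p.2 = b then 1 else 0

/-- `y_{0,k} = col(s_0, …, s_k)`. -/
def ycol (q : ℕ) (s : ℕ → Mq q) (k : ℕ) : Matrix (Fin (k + 1) × Fin q) (Fin q) ℂ :=
  Matrix.of fun p b => s p.1.1 p.2 b

/-- Dyukarev–Stieltjes parameters `𝔐_k`. -/
def DSM (q : ℕ) (s : ℕ → Mq q) : ℕ → Mq q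
  | 0 => (s 0)⁻¹
  | k + 1 =>
      (vcol q (k + 1))ᴴ * (Hmat q s (k + 1))⁻¹ * vcol q (k + 1) -
        (vcol q k)ᴴ * (Hmat q s k)⁻¹ * vcol q k

/-- Dyukarev–Stieltjes parameters `𝔏_k`. -/
def DSL (q : ℕ) (s : ℕ → Mq q) : ℕ → Mq q
  | 0 => s 0 * (s 1)⁻¹ * s 0
  | k + 1 =>
      (ycol q s (k + 1))ᴴ * (Kmat q s (k + 1))⁻¹ * ycol q s (k + 1) -
        (ycol q s k)ᴴ * (Kmat q s k)⁻¹ * ycol q s k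

/-- Ordered product `A_0 A_1 ⋯ A_n`. -/
def oprod {α : Type*} [Monoid α] (f : ℕ → α) (n : ℕ) : α :=
  ((List.range (n + 1)).map f).prod

/-- Block shift `T_n = (δ_{j,k+1} I_q)_{j,k=0}^n`. -/
def Tmat (q n : ℕ) : Matrix (Fin (n + 1) × Fin q) (Fin (n + 1) × Fin q) ℂ :=
  Matrix.of fun p r => if p.1.1 = r.1.1 + 1 ∧ p.2 = r.2 then 1 else 0

/-- `R_n(z) = (I_{(n+1)q} − z T_n)⁻¹`. -/
def Rmat (q n : ℕ) (z : ℂ) : Matrix (Fin (n + 1) × Fin q) (Fin (n + 1) × Fin q) ℂ :=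
  (1 - z • Tmat q n)⁻¹

/-- `u_0 = 0`, `u_n = col(0_{q×q}, −y_{0,n−1})`. -/
def ucol (q : ℕ) (s : ℕ → Mq q) (n : ℕ) : Matrix (Fin (n + 1) × Fin q) (Fin q) ℂ :=
  Matrix.of fun p b => if p.1.1 = 0 then 0 else -(s (p.1.1 - 1) p.2 b)

/-- `col(−H_n⁻¹ y_{n+1,2n+1}, I_q)` of size `(n+2)q × q`. -/
def colH (q : ℕ) (s : ℕ → Mq q) (n : ℕ) : Matrix (Fin (n + 2) × Fin q) (Fin q) ℂ :=
  Matrix.of fun p b =>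
    if h : p.1.1 < n + 1 then
      (-((Hmat q s n)⁻¹ *
          Matrix.of fun (r : Fin (n + 1) × Fin q) (c : Fin q) => s (n + 1 + r.1.1) r.2 c))
        (⟨p.1.1, h⟩, p.2) b
    else if p.2 = b then 1 else 0

/-- `col(−K_n⁻¹ y_{n+2,2n+2}, I_q)` of size `(n+2)q × q`. -/
def colK (q : ℕ) (s : ℕ → Mq q) (n : ℕ) : Matrix (Fin (n + 2) × Fin q) (Fin q) ℂ :=
  Matrix.of fun p b =>
    if h : p.1.1 < n + 1 then
      (-((Kmat q s n)⁻¹ *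
          Matrix.of fun (r : Fin (n + 1) × Fin q) (c : Fin q) => s (n + 2 + r.1.1) r.2 c))
        (⟨p.1.1, h⟩, p.2) b
    else if p.2 = b then 1 else 0

/-- `z_{0,n} = row(s_0, …, s_n)`. -/
def zrow (q : ℕ) (s : ℕ → Mq q) (n : ℕ) : Matrix (Fin q) (Fin (n + 1) × Fin q) ℂ :=
  Matrix.of fun a r => s r.1.1 a r.2

/-- Orthogonal matrix polynomials `P_n`. -/
def Ppoly (q : ℕ) (s : ℕ → Mq q) : ℕ → ℂ → Mq q
  | 0, _ => 1
  | n + 1, z => (vcol q (n + 1))ᴴ * (Rmat q (n + 1) (starRingEnd ℂ z))ᴴ * colH q s n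

/-- Second kind matrix polynomials `Q_n`. -/
def Qpoly (q : ℕ) (s : ℕ → Mq q) : ℕ → ℂ → Mq q
  | 0, _ => 0
  | n + 1, z => -((ucol q s (n + 1))ᴴ * (Rmat q (n + 1) (starRingEnd ℂ z))ᴴ * colH q s n)

/-- Matrix polynomials `P̂_n`. -/
def Phat (q : ℕ) (s : ℕ → Mq q) : ℕ → ℂ → Mq q
  | 0, _ => 1
  | n + 1, z => (vcol q (n + 1))ᴴ * (Rmat q (n + 1) (starRingEnd ℂ z))ᴴ * colK q s n

/-- Matrix polynomials `Q̂_n`. -/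
def Qhat (q : ℕ) (s : ℕ → Mq q) : ℕ → ℂ → Mq q
  | 0, _ => s 0
  | n + 1, z => zrow q s (n + 1) * (Rmat q (n + 1) (starRingEnd ℂ z))ᴴ * colK q s n

/-- `α_n(z)`. -/
def alphaP (q : ℕ) (s : ℕ → Mq q) (n : ℕ) (z : ℂ) : Mq q :=
  1 - z • ((ucol q s n)ᴴ * (Rmat q n (starRingEnd ℂ z))ᴴ * (Hmat q s n)⁻¹ * vcol q n)

/-- `γ_n(z)`. -/
def gammaP (q : ℕ) (s : ℕ → Mq q) (n : ℕ) (z : ℂ) : Mq q :=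
  -(z • ((vcol q n)ᴴ * (Rmat q n (starRingEnd ℂ z))ᴴ * (Hmat q s n)⁻¹ * vcol q n))

/-- `β_n(z)`. -/
def betaP (q : ℕ) (s : ℕ → Mq q) : ℕ → ℂ → Mq q
  | 0, _ => 0
  | n + 1, z => (ycol q s n)ᴴ * (Rmat q n (starRingEnd ℂ z))ᴴ * (Kmat q s n)⁻¹ * ycol q s n

/-- `δ_n(z)`. -/
def deltaP (q : ℕ) (s : ℕ → Mq q) : ℕ → ℂ → Mq q
  | 0, _ => 1
  | n + 1, z =>
      1 + z • ((vcol q n)ᴴ * (Rmat q n (starRingEnd ℂ z))ᴴ * (Kmat q s n)⁻¹ * ycol q s n)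

/-- The resolvent matrices `U_m(z)`. -/
def Umat (q : ℕ) (s : ℕ → Mq q) (m : ℕ) (z : ℂ) : M2q q :=
  if m % 2 = 0 then
    Matrix.fromBlocks (alphaP q s (m / 2) z) (betaP q s (m / 2) z)
      (gammaP q s (m / 2) z) (deltaP q s (m / 2) z)
  else
    Matrix.fromBlocks (alphaP q s (m / 2) z) (betaP q s (m / 2 + 1) z)
      (gammaP q s (m / 2) z) (deltaP q s (m / 2 + 1) z)

/-- `𝕄_k(z) = [[I, 0], [−z𝔐_k, I]]`. -/
def MM (q : ℕ) (s : ℕ → Mq q) (k : ℕ) (z : ℂ) : M2q q :=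
  Matrix.fromBlocks 1 0 (-(z • DSM q s k)) 1

/-- `𝕃_k = [[I, 𝔏_k], [0, I]]`. -/
def LL (q : ℕ) (s : ℕ → Mq q) (k : ℕ) : M2q q :=
  Matrix.fromBlocks 1 (DSL q s k) 0 1

/-- `𝒫_n = diag([P_n(0)]^{−*}, P_n(0))`. -/
def PPmat (q : ℕ) (s : ℕ → Mq q) (n : ℕ) : M2q q :=
  Matrix.fromBlocks (((Ppoly q s n 0)⁻¹)ᴴ) 0 0 (Ppoly q s n 0)

/-- `𝐐_n(z) = [[0, Q̂_n(0)], [−z[Q̂_n(0)]^{−*}, 0]]`. -/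
def QQgen (q : ℕ) (s : ℕ → Mq q) (n : ℕ) (z : ℂ) : M2q q :=
  Matrix.fromBlocks 0 (Qhat q s n 0) (-(z • ((Qhat q s n 0)⁻¹)ᴴ)) 0

/-- `𝐐_0^{(ℓ)}(z) = [[0, s_0^{(ℓ)}], [−z(s_0^{(ℓ)})⁻¹, 0]]`. -/
def QQ0 (q : ℕ) (s : ℕ → Mq q) (ℓ : ℕ) (z : ℂ) : M2q q :=
  Matrix.fromBlocks 0 (katetov q ℓ s 0) (-(z • (katetov q ℓ s 0)⁻¹)) 0

/-- `𝒬_m(z) = 𝐐_0^{(0)}(z) ⋯ 𝐐_0^{(m)}(z)`. -/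
def Qprod (q : ℕ) (s : ℕ → Mq q) (m : ℕ) (z : ℂ) : M2q q :=
  oprod (fun ℓ => QQ0 q s ℓ z) m

namespace St18

open Finset

variable {q : ℕ}

/-- Block column with blocks `g 0, …, g N`. -/
def bcol (N : ℕ) (g : ℕ → Mq q) : Matrix (Fin (N + 1) × Fin q) (Fin q) ℂ :=
  Matrix.of fun p b => g p.1.1 p.2 b

/-- Block row with blocks `x 0, …, x N`. -/
def brow (N : ℕ) (x : ℕ → Mq q) : Matrix (Fin q) (Fin (N + 1) × Fin q) ℂ :=
  Matrix.of fun a p => x p.1.1 a p.2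

/-- Block square matrix with blocks `a j k`. -/
def bmat (N : ℕ) (a : ℕ → ℕ → Mq q) : Matrix (Fin (N + 1) × Fin q) (Fin (N + 1) × Fin q) ℂ :=
  Matrix.of fun p r => a p.1.1 r.1.1 p.2 r.2

lemma bmat_mul_bmat (N : ℕ) (a b : ℕ → ℕ → Mq q) :
    bmat N a * bmat N b = bmat N (fun j k => ∑ l ∈ range (N + 1), a j l * b l k) := by
  ext p r
  simp [Matrix.mul_apply, bmat, Matrix.of_apply, Fintype.sum_prod_type,
    Matrix.sum_apply, ← Fin.sum_univ_eq_sum_range]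

lemma bmat_mul_bcol (N : ℕ) (a : ℕ → ℕ → Mq q) (g : ℕ → Mq q) :
    bmat N a * bcol N g = bcol N (fun j => ∑ l ∈ range (N + 1), a j l * g l) := by
  ext p b
  simp [Matrix.mul_apply, bmat, bcol, Matrix.of_apply, Fintype.sum_prod_type,
    Matrix.sum_apply, ← Fin.sum_univ_eq_sum_range]

lemma brow_mul_bmat (N : ℕ) (x : ℕ → Mq q) (a : ℕ → ℕ → Mq q) :
    brow N x * bmat N a = brow N (fun k => ∑ l ∈ range (N + 1), x l * a l k) := by
  ext c p
  simp [Matrix.mul_apply, bmat, brow, Matrix.of_apply, Fintype.sum_prod_type,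
    Matrix.sum_apply, ← Fin.sum_univ_eq_sum_range]

lemma brow_mul_bcol (N : ℕ) (x : ℕ → Mq q) (g : ℕ → Mq q) :
    brow N x * bcol N g = ∑ l ∈ range (N + 1), x l * g l := by
  ext a b
  simp [Matrix.mul_apply, brow, bcol, Matrix.of_apply, Fintype.sum_prod_type,
    Matrix.sum_apply, ← Fin.sum_univ_eq_sum_range]

lemma bcol_conjTranspose (N : ℕ) (g : ℕ → Mq q) :
    (bcol N g)ᴴ = brow N (fun j => (g j)ᴴ) := rfl

lemma bmat_conjTranspose (N : ℕ) (a : ℕ → ℕ → Mq q) :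
    (bmat N a)ᴴ = bmat N (fun j k => (a k j)ᴴ) := rfl

lemma bcol_eq_iff (N : ℕ) (g h : ℕ → Mq q) :
    bcol N g = bcol N h ↔ ∀ j < N + 1, g j = h j := by
  constructor
  · intro he j hj
    ext a b
    have := congrFun (congrFun he (⟨j, hj⟩, a)) b
    simpa [bcol] using this
  · intro he
    ext p b
    simp [bcol, he p.1.1 p.1.2]

lemma bcol_smul (N : ℕ) (z : ℂ) (g : ℕ → Mq q) :
    z • bcol N g = bcol N (fun j => z • g j) := rfl

lemma bmat_smul (N : ℕ) (z : ℂ) (a : ℕ → ℕ → Mq q) :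
    z • bmat N a = bmat N (fun j k => z • a j k) := rfl

lemma bmat_one (N : ℕ) : (1 : Matrix (Fin (N + 1) × Fin q) (Fin (N + 1) × Fin q) ℂ) =
    bmat N (fun j k => if j = k then 1 else 0) := by
  ext p r
  by_cases h1 : p.1.1 = r.1.1
  · have h1' : p.1 = r.1 := Fin.ext h1
    by_cases h2 : p.2 = r.2
    · have : p = r := Prod.ext h1' h2
      simp [this, bmat, h1, Matrix.one_apply]
    · have : p ≠ r := fun h => h2 (congrArg Prod.snd h)
      simp [bmat, h1, Matrix.one_apply, this, h2]
  · have : p ≠ r := fun h => h1 (congrArg (fun x => x.1.1) h)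
    simp [bmat, h1, Matrix.one_apply, this]

lemma bmat_sub (N : ℕ) (a b : ℕ → ℕ → Mq q) :
    bmat N a - bmat N b = bmat N (fun j k => a j k - b j k) := rfl

section Ident
variable {q : ℕ} (s : ℕ → Mq q)

lemma sum_if_le {M : Type*} [AddCommMonoid M] (R a : ℕ) (h : a < R) (f : ℕ → M) :
    ∑ l ∈ Finset.range R, (if l ≤ a then f l else 0) = ∑ l ∈ Finset.range (a + 1), f l := by
  rw [← Finset.sum_filter]
  apply Finset.sum_congr _ (fun x _ => rfl)
  ext x
  simp only [Finset.mem_filter, Finset.mem_range]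
  omega

lemma sum_if_ge {M : Type*} [AddCommMonoid M] (R a : ℕ) (f : ℕ → M) :
    ∑ l ∈ Finset.range R, (if a ≤ l then f l else 0) = ∑ l ∈ Finset.Ico a R, f l := by
  rw [← Finset.sum_filter]
  apply Finset.sum_congr _ (fun x _ => rfl)
  ext x
  simp only [Finset.mem_filter, Finset.mem_range, Finset.mem_Ico]
  omega

lemma bmat_ext {N : ℕ} {a b : ℕ → ℕ → Mq q}
    (h : ∀ j < N + 1, ∀ k < N + 1, a j k = b j k) : bmat N a = bmat N b := by
  ext p r
  simp [bmat, h p.1.1 p.1.2 r.1.1 r.1.2]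

lemma bmat_zero (N : ℕ) :
    bmat N (fun _ _ => (0 : Mq q)) = 0 := by
  ext p r; simp [bmat]

lemma bmat_sum {ι : Type*} (F : Finset ι) (N : ℕ) (a : ι → ℕ → ℕ → Mq q) :
    ∑ m ∈ F, bmat N (a m) = bmat N (fun j k => ∑ m ∈ F, a m j k) := by
  ext p r
  simp [bmat, Matrix.sum_apply]

lemma Hmat_eq (n : ℕ) : Hmat q s n = bmat n (fun j k => s (j + k)) := rfl

lemma Kmat_eq (n : ℕ) : Kmat q s n = bmat n (fun j k => s (j + k + 1)) := rfl

lemma ycol_eq (n : ℕ) : ycol q s n = bcol n s := rfl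

lemma zrow_eq (n : ℕ) : zrow q s n = brow n s := rfl

lemma vcol_eq (N : ℕ) : vcol q N = bcol N (fun j => if j = 0 then 1 else 0) := by
  ext p b
  by_cases h : p.1 = 0 <;> simp [vcol, bcol, h, Matrix.one_apply]

lemma ucol_eq (N : ℕ) :
    ucol q s N = bcol N (fun j => if j = 0 then 0 else -(s (j - 1))) := by
  ext p b
  by_cases h : p.1 = 0 <;> simp [ucol, bcol, h]

lemma Tmat_eq (N : ℕ) : Tmat q N = bmat N (fun j k => if j = k + 1 then 1 else 0) := by
  ext p r
  by_cases h : p.1.1 = r.1.1 + 1 <;> simp [Tmat, bmat, h, Matrix.one_apply]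

/-- Blocks of `colH q s n` (extended by `0`). -/
def cH (s : ℕ → Mq q) (n j : ℕ) : Mq q :=
  Matrix.of fun a b => if h : j < n + 2 then colH q s n (⟨j, h⟩, a) b else 0

/-- Blocks of `colK q s n` (extended by `0`). -/
def cK (s : ℕ → Mq q) (n j : ℕ) : Mq q :=
  Matrix.of fun a b => if h : j < n + 2 then colK q s n (⟨j, h⟩, a) b else 0

lemma colH_eq (n : ℕ) : colH q s n = bcol (n + 1) (cH s n) := by
  ext p b
  simp [bcol, cH, p.1.2]

lemma colK_eq (n : ℕ) : colK q s n = bcol (n + 1) (cK s n) := by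
  ext p b
  simp [bcol, cK, p.1.2]

lemma cH_top (n : ℕ) : cH s n (n + 1) = 1 := by
  ext a b
  simp [cH, colH, Matrix.one_apply]

lemma cK_top (n : ℕ) : cK s n (n + 1) = 1 := by
  ext a b
  simp [cK, colK, Matrix.one_apply]

lemma cH_head (n : ℕ) :
    bcol n (cH s n) = -((Hmat q s n)⁻¹ * bcol n (fun k => s (n + 1 + k))) := by
  ext p b
  have h2 : (p.1.1 : ℕ) < n + 2 := by omega
  have h1 : (p.1.1 : ℕ) < n + 1 := p.1.2
  simp only [bcol, cH, colH, Matrix.of_apply, dif_pos h2, dif_pos h1]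

lemma cK_head (n : ℕ) :
    bcol n (cK s n) = -((Kmat q s n)⁻¹ * bcol n (fun k => s (n + 2 + k))) := by
  ext p b
  have h2 : (p.1.1 : ℕ) < n + 2 := by omega
  have h1 : (p.1.1 : ℕ) < n + 1 := p.1.2
  simp only [bcol, cK, colK, Matrix.of_apply, dif_pos h2, dif_pos h1]

lemma bcol_neg (N : ℕ) (g : ℕ → Mq q) : -bcol N g = bcol N (fun j => -g j) := rfl

lemma orthH (n : ℕ) (hdet : IsUnit (Hmat q s n).det) :
    ∀ j ≤ n, ∑ k ∈ Finset.range (n + 2), s (j + k) * cH s n k = 0 := by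
  have h1 : Hmat q s n * bcol n (cH s n) = bcol n (fun k => -(s (n + 1 + k))) := by
    rw [cH_head, Matrix.mul_neg, ← Matrix.mul_assoc, Matrix.mul_nonsing_inv _ hdet,
      Matrix.one_mul, bcol_neg]
  rw [Hmat_eq, bmat_mul_bcol] at h1
  intro j hj
  have h2 := (bcol_eq_iff _ _ _).1 h1 j (by omega)
  rw [Finset.sum_range_succ, h2, cH_top]
  rw [mul_one]
  rw [show n + 1 + j = j + (n + 1) by omega]
  exact neg_add_cancel _

lemma orthK (n : ℕ) (hdet : IsUnit (Kmat q s n).det) :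
    ∀ j ≤ n, ∑ k ∈ Finset.range (n + 2), s (j + k + 1) * cK s n k = 0 := by
  have h1 : Kmat q s n * bcol n (cK s n) = bcol n (fun k => -(s (n + 2 + k))) := by
    rw [cK_head, Matrix.mul_neg, ← Matrix.mul_assoc, Matrix.mul_nonsing_inv _ hdet,
      Matrix.one_mul, bcol_neg]
  rw [Kmat_eq, bmat_mul_bcol] at h1
  intro j hj
  have h2 := (bcol_eq_iff _ _ _).1 h1 j (by omega)
  rw [Finset.sum_range_succ, h2, cK_top]
  rw [mul_one]
  rw [show n + 2 + j = j + (n + 1) + 1 by omega]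
  exact neg_add_cancel _

lemma uniqH (n : ℕ) (hdet : IsUnit (Hmat q s n).det) (d : ℕ → Mq q)
    (hd : ∀ j ≤ n, ∑ k ∈ Finset.range (n + 2), s (j + k) * d k = 0)
    (htop : d (n + 1) = 1) :
    ∀ j < n + 2, d j = cH s n j := by
  have key : ∀ (e : ℕ → Mq q), e (n + 1) = 1 →
      (∀ j ≤ n, ∑ k ∈ Finset.range (n + 2), s (j + k) * e k = 0) →
      Hmat q s n * bcol n e = bcol n (fun j => -(s (j + (n + 1)))) := by
    intro e het he
    rw [Hmat_eq, bmat_mul_bcol]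
    rw [bcol_eq_iff]
    intro j hj
    have := he j (by omega)
    rw [Finset.sum_range_succ, het, mul_one] at this
    linear_combination (norm := abel) this
  have h1 := key d htop hd
  have h2 := key (cH s n) (cH_top s n) (orthH s n hdet)
  have h3 : bcol n d = bcol n (cH s n) := by
    have := h1.trans h2.symm
    calc bcol n d = (Hmat q s n)⁻¹ * (Hmat q s n * bcol n d) := by
          rw [← Matrix.mul_assoc, Matrix.nonsing_inv_mul _ hdet, Matrix.one_mul]
      _ = (Hmat q s n)⁻¹ * (Hmat q s n * bcol n (cH s n)) := by rw [this]
      _ = bcol n (cH s n) := by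
          rw [← Matrix.mul_assoc, Matrix.nonsing_inv_mul _ hdet, Matrix.one_mul]
  intro j hj
  rcases Nat.lt_or_ge j (n + 1) with h | h
  · exact (bcol_eq_iff _ _ _).1 h3 j h
  · have : j = n + 1 := by omega
    rw [this, htop, cH_top]

lemma uniqK (n : ℕ) (hdet : IsUnit (Kmat q s n).det) (d : ℕ → Mq q)
    (hd : ∀ j ≤ n, ∑ k ∈ Finset.range (n + 2), s (j + k + 1) * d k = 0)
    (htop : d (n + 1) = 1) :
    ∀ j < n + 2, d j = cK s n j := by
  have key : ∀ (e : ℕ → Mq q), e (n + 1) = 1 →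
      (∀ j ≤ n, ∑ k ∈ Finset.range (n + 2), s (j + k + 1) * e k = 0) →
      Kmat q s n * bcol n e = bcol n (fun j => -(s (j + (n + 1) + 1))) := by
    intro e het he
    rw [Kmat_eq, bmat_mul_bcol]
    rw [bcol_eq_iff]
    intro j hj
    have := he j (by omega)
    rw [Finset.sum_range_succ, het, mul_one] at this
    linear_combination (norm := abel) this
  have h1 := key d htop hd
  have h2 := key (cK s n) (cK_top s n) (orthK s n hdet)
  have h3 : bcol n d = bcol n (cK s n) := by
    have := h1.trans h2.symm
    calc bcol n d = (Kmat q s n)⁻¹ * (Kmat q s n * bcol n d) := by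
          rw [← Matrix.mul_assoc, Matrix.nonsing_inv_mul _ hdet, Matrix.one_mul]
      _ = (Kmat q s n)⁻¹ * (Kmat q s n * bcol n (cK s n)) := by rw [this]
      _ = bcol n (cK s n) := by
          rw [← Matrix.mul_assoc, Matrix.nonsing_inv_mul _ hdet, Matrix.one_mul]
  intro j hj
  rcases Nat.lt_or_ge j (n + 1) with h | h
  · exact (bcol_eq_iff _ _ _).1 h3 j h
  · have : j = n + 1 := by omega
    rw [this, htop, cK_top]

end Ident

section Rm
variable {q : ℕ} (s : ℕ → Mq q)

lemma Tmat_pow (N m : ℕ) :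
    (Tmat q N) ^ m = bmat N (fun j k => if j = k + m then 1 else 0) := by
  induction m with
  | zero =>
      rw [pow_zero, bmat_one]
      exact bmat_ext fun j _ k _ => by simp
  | succ m ih =>
      rw [pow_succ, ih, Tmat_eq, bmat_mul_bmat]
      apply bmat_ext
      intro j hj k hk
      have : ∀ l, (if j = l + m then (1 : Mq q) else 0) * (if l = k + 1 then 1 else 0)
          = if l = k + 1 then (if j = l + m then (1 : Mq q) else 0) else 0 := by
        intro l
        by_cases h : l = k + 1 <;> simp [h]
      simp only [this, Finset.sum_ite_eq' (Finset.range (N + 1)) (k + 1)]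
      by_cases hm : k + 1 ∈ Finset.range (N + 1)
      · rw [if_pos hm]
        have : (j = k + 1 + m) ↔ (j = k + (m + 1)) := by omega
        simp only [this]
      · rw [if_neg hm]
        have : ¬(j = k + (m + 1)) := by
          simp only [Finset.mem_range] at hm; omega
        rw [if_neg this]

lemma Tmat_pow_top (N : ℕ) : (Tmat q N) ^ (N + 1) = 0 := by
  rw [Tmat_pow, ← bmat_zero]
  apply bmat_ext
  intro j hj k hk
  rw [if_neg (by omega)]

lemma Rmat_expand (N : ℕ) (w : ℂ) :
    Rmat q N w = ∑ m ∈ Finset.range (N + 1), w ^ m • (Tmat q N) ^ m := by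
  apply Matrix.inv_eq_right_inv
  have expand : ∀ m : ℕ,
      (1 - w • Tmat q N) * (w ^ m • (Tmat q N) ^ m)
        = w ^ m • (Tmat q N) ^ m - w ^ (m + 1) • (Tmat q N) ^ (m + 1) := by
    intro m
    rw [sub_mul, one_mul, Matrix.smul_mul, Matrix.mul_smul, smul_smul, ← pow_succ', ← pow_succ']
  rw [Finset.mul_sum]
  simp only [expand]
  rw [Finset.sum_range_sub' (fun m => w ^ m • (Tmat q N) ^ m) (N + 1)]
  rw [Tmat_pow_top]
  simp

lemma Rmat_star (N : ℕ) (z : ℂ) :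
    (Rmat q N (starRingEnd ℂ z))ᴴ
      = bmat N (fun j k => if j ≤ k then z ^ (k - j) • (1 : Mq q) else 0) := by
  have h1 : Rmat q N (starRingEnd ℂ z)
      = bmat N (fun j k => if k ≤ j then (starRingEnd ℂ z) ^ (j - k) • (1 : Mq q) else 0) := by
    rw [Rmat_expand]
    have : ∀ m ∈ Finset.range (N + 1), (starRingEnd ℂ z) ^ m • (Tmat q N) ^ m
        = bmat N (fun j k => if j = k + m then (starRingEnd ℂ z) ^ m • (1 : Mq q) else 0) := by
      intro m _
      rw [Tmat_pow, bmat_smul]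
      apply bmat_ext
      intro j _ k _
      by_cases h : j = k + m <;> simp [h]
    rw [Finset.sum_congr rfl this, bmat_sum]
    apply bmat_ext
    intro j hj k hk
    by_cases h : k ≤ j
    · have : ∀ m, (if j = k + m then (starRingEnd ℂ z) ^ m • (1 : Mq q) else 0)
          = if m = j - k then (starRingEnd ℂ z) ^ m • (1 : Mq q) else 0 := by
        intro m
        have : (j = k + m) ↔ (m = j - k) := by omega
        simp only [this]
      simp only [this, Finset.sum_ite_eq' (Finset.range (N + 1)) (j - k)]
      rw [if_pos (Finset.mem_range.2 (by omega)), if_pos h]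
    · have : ∀ m, (if j = k + m then (starRingEnd ℂ z) ^ m • (1 : Mq q) else 0) = 0 := by
        intro m
        rw [if_neg (by omega)]
      rw [Finset.sum_congr rfl (fun m _ => this m), Finset.sum_const_zero, if_neg h]
  rw [h1, bmat_conjTranspose]
  apply bmat_ext
  intro j hj k hk
  by_cases h : j ≤ k
  · rw [if_pos h, if_pos h]
    rw [Matrix.conjTranspose_smul, Matrix.conjTranspose_one]
    congr 1
    rw [← map_pow]
    exact Complex.conj_conj _
  · rw [if_neg h, if_neg h, Matrix.conjTranspose_zero]

lemma master (N : ℕ) (x g : ℕ → Mq q) (z : ℂ) :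
    brow N x * (Rmat q N (starRingEnd ℂ z))ᴴ * bcol N g
      = ∑ k ∈ Finset.range (N + 1), ∑ j ∈ Finset.range (k + 1),
          z ^ (k - j) • (x j * g k) := by
  rw [Rmat_star, brow_mul_bmat, brow_mul_bcol]
  apply Finset.sum_congr rfl
  intro k hk
  have h1 : ∀ l, x l * (if l ≤ k then z ^ (k - l) • (1 : Mq q) else 0)
      = if l ≤ k then z ^ (k - l) • x l else 0 := by
    intro l
    by_cases h : l ≤ k <;> simp [h, mul_smul_comm]
  have h2 : (∑ l ∈ Finset.range (N + 1), x l * (if l ≤ k then z ^ (k - l) • (1 : Mq q) else 0))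
      = ∑ l ∈ Finset.range (k + 1), z ^ (k - l) • x l := by
    rw [Finset.sum_congr rfl (fun l _ => h1 l), sum_if_le _ _ (Finset.mem_range.1 hk)]
  rw [h2, Finset.sum_mul]
  apply Finset.sum_congr rfl
  intro j _
  rw [Matrix.smul_mul]

lemma Ppoly_eq (n : ℕ) (z : ℂ) :
    Ppoly q s (n + 1) z = ∑ k ∈ Finset.range (n + 2), z ^ k • cH s n k := by
  show (vcol q (n + 1))ᴴ * (Rmat q (n + 1) (starRingEnd ℂ z))ᴴ * colH q s n = _
  rw [vcol_eq, bcol_conjTranspose, colH_eq, master]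
  apply Finset.sum_congr rfl
  intro k hk
  have h1 : ∀ j, z ^ (k - j) • (((if j = 0 then 1 else 0 : Mq q))ᴴ * cH s n k)
      = if j = 0 then z ^ k • cH s n k else 0 := by
    intro j
    by_cases h : j = 0 <;> simp [h]
  rw [Finset.sum_congr rfl (fun j _ => h1 j)]
  rw [Finset.sum_ite_eq' (Finset.range (k + 1)) 0]
  rw [if_pos (Finset.mem_range.2 (by omega))]

lemma Phat_eq (n : ℕ) (z : ℂ) :
    Phat q s (n + 1) z = ∑ k ∈ Finset.range (n + 2), z ^ k • cK s n k := by
  show (vcol q (n + 1))ᴴ * (Rmat q (n + 1) (starRingEnd ℂ z))ᴴ * colK q s n = _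
  rw [vcol_eq, bcol_conjTranspose, colK_eq, master]
  apply Finset.sum_congr rfl
  intro k hk
  have h1 : ∀ j, z ^ (k - j) • (((if j = 0 then 1 else 0 : Mq q))ᴴ * cK s n k)
      = if j = 0 then z ^ k • cK s n k else 0 := by
    intro j
    by_cases h : j = 0 <;> simp [h]
  rw [Finset.sum_congr rfl (fun j _ => h1 j)]
  rw [Finset.sum_ite_eq' (Finset.range (k + 1)) 0]
  rw [if_pos (Finset.mem_range.2 (by omega))]

lemma Qhat_eq (n : ℕ) (z : ℂ) (hherm : ∀ m, (s m)ᴴ = s m) :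
    Qhat q s (n + 1) z = ∑ k ∈ Finset.range (n + 2), ∑ j ∈ Finset.range (k + 1),
      z ^ (k - j) • (s j * cK s n k) := by
  show zrow q s (n + 1) * (Rmat q (n + 1) (starRingEnd ℂ z))ᴴ * colK q s n = _
  rw [zrow_eq, colK_eq, master]

lemma Qpoly_eq (n : ℕ) (z : ℂ) (hherm : ∀ m, (s m)ᴴ = s m) :
    Qpoly q s (n + 1) z = ∑ k ∈ Finset.range (n + 2), ∑ j ∈ Finset.range (k + 1),
      z ^ (k - j) • (if j = 0 then 0 else s (j - 1) * cH s n k) := by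
  show -((ucol q s (n + 1))ᴴ * (Rmat q (n + 1) (starRingEnd ℂ z))ᴴ * colH q s n) = _
  rw [ucol_eq, bcol_conjTranspose, colH_eq, master, ← Finset.sum_neg_distrib]
  apply Finset.sum_congr rfl
  intro k _
  rw [← Finset.sum_neg_distrib]
  apply Finset.sum_congr rfl
  intro j _
  by_cases h : j = 0
  · simp [h]
  · rw [if_neg h, if_neg h, ← smul_neg]
    congr 1
    rw [Matrix.conjTranspose_neg, hherm, neg_mul, neg_neg]

end Rm

section Recip
variable {q : ℕ} (s : ℕ → Mq q)

lemma recip_zero : reciprocal q s 0 = (s 0)⁻¹ := by rw [reciprocal]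

lemma recip_succ (j : ℕ) :
    reciprocal q s (j + 1)
      = -(s 0)⁻¹ * ∑ l ∈ Finset.range (j + 1), s (j + 1 - l) * reciprocal q s l := by
  rw [reciprocal]
  congr 1
  exact Finset.sum_attach (Finset.range (j + 1)) (fun l => s (j + 1 - l) * reciprocal q s l)

lemma conv_sr (hdet : IsUnit (s 0).det) (m : ℕ) :
    ∑ l ∈ Finset.range (m + 1), s l * reciprocal q s (m - l)
      = if m = 0 then 1 else 0 := by
  cases m with
  | zero =>
      rw [if_pos rfl, Finset.sum_range_one, Nat.sub_zero, recip_zero]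
      exact Matrix.mul_nonsing_inv _ hdet
  | succ m =>
      rw [if_neg (Nat.succ_ne_zero m)]
      have refl1 : ∑ l ∈ Finset.range (m + 2), s l * reciprocal q s (m + 1 - l)
          = ∑ l ∈ Finset.range (m + 2), s (m + 1 - l) * reciprocal q s l := by
        rw [← Finset.sum_range_reflect (fun l => s (m + 1 - l) * reciprocal q s l) (m + 2)]
        apply Finset.sum_congr rfl
        intro l hl
        have hl' : l < m + 2 := Finset.mem_range.1 hl
        rw [show m + 2 - 1 - l = m + 1 - l by omega, show m + 1 - (m + 1 - l) = l by omega]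
      rw [refl1, Finset.sum_range_succ, Nat.sub_self, recip_succ,
        neg_mul, mul_neg, ← mul_assoc, Matrix.mul_nonsing_inv _ hdet, one_mul,
        add_neg_cancel]

lemma mk_mul_recip (hdet : IsUnit (s 0).det) :
    PowerSeries.mk s * PowerSeries.mk (reciprocal q s) = 1 := by
  apply PowerSeries.ext
  intro m
  rw [PowerSeries.coeff_mul, Finset.Nat.sum_antidiagonal_eq_sum_range_succ_mk]
  simp only [PowerSeries.coeff_mk, PowerSeries.coeff_one]
  exact conv_sr s hdet m

lemma recip_mul_mk (hdet : IsUnit (s 0).det) :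
    PowerSeries.mk (reciprocal q s) * PowerSeries.mk s = 1 := by
  have hdet' : IsUnit (reciprocal q s 0).det := by
    rw [recip_zero, Matrix.det_nonsing_inv]
    exact isUnit_ringInverse.mpr hdet
  have h1 := mk_mul_recip s hdet
  have h2 := mk_mul_recip (reciprocal q s) hdet'
  have h3 : PowerSeries.mk s = PowerSeries.mk (reciprocal q (reciprocal q s)) := by
    calc PowerSeries.mk s
        = PowerSeries.mk s * (PowerSeries.mk (reciprocal q s)
            * PowerSeries.mk (reciprocal q (reciprocal q s))) := by rw [h2, mul_one]
      _ = (PowerSeries.mk s * PowerSeries.mk (reciprocal q s))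
            * PowerSeries.mk (reciprocal q (reciprocal q s)) := by rw [mul_assoc]
      _ = PowerSeries.mk (reciprocal q (reciprocal q s)) := by rw [h1, one_mul]
  rw [h3]
  exact h2

lemma conv_rs (hdet : IsUnit (s 0).det) (m : ℕ) :
    ∑ l ∈ Finset.range (m + 1), reciprocal q s l * s (m - l)
      = if m = 0 then 1 else 0 := by
  have := recip_mul_mk s hdet
  have h := congrArg (PowerSeries.coeff m) this
  rw [PowerSeries.coeff_mul, Finset.Nat.sum_antidiagonal_eq_sum_range_succ_mk] at h
  simpa [PowerSeries.coeff_mk, PowerSeries.coeff_one] using h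

lemma conv_rs' (hdet : IsUnit (s 0).det) (m : ℕ) :
    ∑ l ∈ Finset.range (m + 1), reciprocal q s (m - l) * s l
      = if m = 0 then 1 else 0 := by
  rw [← conv_rs s hdet m,
    ← Finset.sum_range_reflect (fun l => reciprocal q s l * s (m - l)) (m + 1)]
  apply Finset.sum_congr rfl
  intro l hl
  have hl' : l < m + 1 := Finset.mem_range.1 hl
  rw [show m + 1 - 1 - l = m - l by omega, show m - (m - l) = l by omega]

lemma conv_sr' (hdet : IsUnit (s 0).det) (m : ℕ) :
    ∑ l ∈ Finset.range (m + 1), s (m - l) * reciprocal q s l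
      = if m = 0 then 1 else 0 := by
  rw [← conv_sr s hdet m,
    ← Finset.sum_range_reflect (fun l => s l * reciprocal q s (m - l)) (m + 1)]
  apply Finset.sum_congr rfl
  intro l hl
  have hl' : l < m + 1 := Finset.mem_range.1 hl
  rw [show m + 1 - 1 - l = m - l by omega, show m - (m - l) = l by omega]

lemma herm_recip (hdet : IsUnit (s 0).det) (hherm : ∀ m, (s m)ᴴ = s m) (m : ℕ) :
    (reciprocal q s m)ᴴ = reciprocal q s m := by
  set u : ℕ → Mq q := fun j => (reciprocal q s j)ᴴ with hu
  have kmul : PowerSeries.mk s * PowerSeries.mk u = 1 := by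
    apply PowerSeries.ext
    intro m
    rw [PowerSeries.coeff_mul, Finset.Nat.sum_antidiagonal_eq_sum_range_succ_mk]
    simp only [PowerSeries.coeff_mk, PowerSeries.coeff_one]
    have : ∀ l ∈ Finset.range (m + 1), s l * u (m - l)
        = (reciprocal q s (m - l) * s l)ᴴ := by
      intro l _
      rw [Matrix.conjTranspose_mul, hherm]
    rw [Finset.sum_congr rfl this, ← Matrix.conjTranspose_sum, conv_rs' s hdet m]
    split_ifs with h
    · exact Matrix.conjTranspose_one
    · exact Matrix.conjTranspose_zero
  have h1 := mk_mul_recip s hdet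
  have h2 := recip_mul_mk s hdet
  have : PowerSeries.mk u = PowerSeries.mk (reciprocal q s) := by
    calc PowerSeries.mk u = (PowerSeries.mk (reciprocal q s) * PowerSeries.mk s)
          * PowerSeries.mk u := by rw [h2, one_mul]
      _ = PowerSeries.mk (reciprocal q s) * (PowerSeries.mk s * PowerSeries.mk u) := by
          rw [mul_assoc]
      _ = PowerSeries.mk (reciprocal q s) := by rw [kmul, mul_one]
  have := congrArg (PowerSeries.coeff m) this
  simpa [PowerSeries.coeff_mk] using this

end Recip

section Herm
variable {q : ℕ} {s : ℕ → Mq q}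

lemma herm_s (hs : IsStieltjesPD q s) (m : ℕ) : (s m)ᴴ = s m := by
  have hH : (Hmat q s m)ᴴ = Hmat q s m := (hs m).1.isHermitian
  ext a b
  have h0 : (0 : ℕ) < m + 1 := Nat.succ_pos m
  have hm : m < m + 1 := Nat.lt_succ_self m
  have h2 := congrFun (congrFun hH ((⟨m, hm⟩ : Fin (m + 1)), a)) ((⟨0, h0⟩ : Fin (m + 1)), b)
  simp only [Matrix.conjTranspose_apply, Hmat, Matrix.of_apply] at h2
  rw [Matrix.conjTranspose_apply]
  simpa using h2

lemma detH (hs : IsStieltjesPD q s) (n : ℕ) : IsUnit (Hmat q s n).det :=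
  (hs n).1.det_pos.ne'.isUnit

lemma detK (hs : IsStieltjesPD q s) (n : ℕ) : IsUnit (Kmat q s n).det :=
  (hs n).2.det_pos.ne'.isUnit

/-- The equivalence `Fin q ≃ Fin 1 × Fin q`. -/
def e1 (q : ℕ) : Fin q ≃ Fin 1 × Fin q where
  toFun := fun b => ((0 : Fin 1), b)
  invFun := fun p => p.2
  left_inv := fun b => rfl
  right_inv := fun p => Prod.ext (Subsingleton.elim _ _) rfl

lemma detS0 (hs : IsStieltjesPD q s) : IsUnit (s 0).det := by
  have hsub : (Hmat q s 0).submatrix (e1 q) (e1 q) = s 0 := by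
    ext a b
    simp [Hmat, e1, Matrix.submatrix_apply]
  have hdet : ((Hmat q s 0).submatrix (e1 q) (e1 q)).det = (Hmat q s 0).det :=
    Matrix.det_submatrix_equiv_self (e1 q) _
  rw [hsub] at hdet
  rw [hdet]
  exact detH hs 0

end Herm

section Trans
variable {q : ℕ} (s : ℕ → Mq q)

lemma katetov_one : katetov q 1 s = katetov1 q s := by
  rw [katetov, Function.iterate_one]

lemma t_apply (j : ℕ) : katetov1 q s j = -(s 0) * reciprocal q s (j + 1) * s 0 := rfl

lemma herm_t (hdet : IsUnit (s 0).det) (hherm : ∀ m, (s m)ᴴ = s m) (j : ℕ) :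
    (katetov1 q s j)ᴴ = katetov1 q s j := by
  rw [t_apply, Matrix.conjTranspose_mul, Matrix.conjTranspose_mul, hherm 0,
    Matrix.conjTranspose_neg, hherm 0, herm_recip s hdet hherm]
  noncomm_ring

lemma tred (hinv : (s 0)⁻¹ * s 0 = 1) (m : ℕ) (A : Mq q) :
    -(s 0)⁻¹ * ((-(s 0) * reciprocal q s m * s 0) * A) = reciprocal q s m * (s 0 * A) := by
  have h : -(s 0)⁻¹ * ((-(s 0) * reciprocal q s m * s 0) * A)
      = ((s 0)⁻¹ * s 0) * (reciprocal q s m * (s 0 * A)) := by noncomm_ring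
  rw [h, hinv, one_mul]

lemma bcol_zero (N : ℕ) : bcol N (fun _ => (0 : Mq q)) = 0 := rfl

lemma kernel_of_det (N : ℕ) (f : ℕ → ℕ → Mq q) (h : ¬ IsUnit (bmat N f).det) :
    ∃ w : ℕ → Mq q, (∃ k ≤ N, w k ≠ 0) ∧
      (∀ j ≤ N, ∑ k ∈ Finset.range (N + 1), f j k * w k = 0) := by
  have hdet : (bmat N f).det = 0 := by
    by_contra hne
    exact h (isUnit_iff_ne_zero.2 hne)
  obtain ⟨v, hv0, hvk⟩ := Matrix.exists_mulVec_eq_zero_iff.2 hdet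
  set w : ℕ → Mq q :=
    fun k => Matrix.of (fun a _ => if hk : k < N + 1 then v (⟨k, hk⟩, a) else 0) with hw
  have hwv : ∀ p : Fin (N + 1) × Fin q, ∀ b : Fin q, w p.1.1 p.2 b = v p := by
    intro p b
    simp only [hw, Matrix.of_apply, dif_pos p.1.2]
  refine ⟨w, ?_, ?_⟩
  · obtain ⟨p, hp⟩ := Function.ne_iff.1 hv0
    refine ⟨p.1.1, by omega, ?_⟩
    intro h0
    apply hp
    have h1 := hwv p p.2
    rw [h0] at h1
    exact h1.symm
  · intro j hj
    have hcol : bmat N f * bcol N w = 0 := by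
      ext p b
      rw [Matrix.mul_apply]
      have h2 : Matrix.mulVec (bmat N f) v p = 0 := congrFun hvk p
      rw [Matrix.mulVec, dotProduct] at h2
      rw [show (0 : Matrix (Fin (N + 1) × Fin q) (Fin q) ℂ) p b = 0 from rfl, ← h2]
      apply Finset.sum_congr rfl
      intro x _
      congr 1
      exact hwv x b
    rw [bmat_mul_bcol, ← bcol_zero N] at hcol
    exact (bcol_eq_iff _ _ _).1 hcol j (by omega)

lemma detHt (hs : IsStieltjesPD q s) (n : ℕ) :
    IsUnit (Hmat q (katetov1 q s) n).det := by
  by_contra hcon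
  have hcon' : ¬ IsUnit (bmat n (fun j k => katetov1 q s (j + k))).det := hcon
  obtain ⟨w, ⟨k0, hk0, hw0⟩, hker⟩ := kernel_of_det n _ hcon'
  have hdet0 := detS0 hs
  have hinv : (s 0)⁻¹ * s 0 = 1 := Matrix.nonsing_inv_mul _ hdet0
  have hinv' : s 0 * (s 0)⁻¹ = 1 := Matrix.mul_nonsing_inv _ hdet0
  set ω : ℕ → Mq q := fun k => s 0 * w k with hωdef
  have E1 : ∀ j ≤ n, ∑ k ∈ Finset.range (n + 1), reciprocal q s (j + k + 1) * ω k = 0 := by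
    intro j hj
    have h0 := hker j hj
    have e2 : ∀ k, reciprocal q s (j + k + 1) * ω k
        = -(s 0)⁻¹ * (katetov1 q s (j + k) * w k) := fun k =>
      (tred s hinv (j + k + 1) (w k)).symm
    rw [Finset.sum_congr rfl fun k _ => e2 k, ← Finset.mul_sum, h0, mul_zero]
  set ω' : ℕ → Mq q :=
    fun m => ∑ k ∈ Finset.range (n + 1),
      if m ≤ k then reciprocal q s (k - m) * ω k else 0 with hω'def
  have convA : ∀ i k : ℕ,
      ∑ m ∈ Finset.range (k + 1), s (i + m + 1) * reciprocal q s (k - m)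
        = -∑ l ∈ Finset.range (i + 1), s l * reciprocal q s (i + k + 1 - l) := by
    intro i k
    have h0 := conv_sr s hdet0 (i + k + 1)
    rw [if_neg (by omega)] at h0
    rw [← Finset.sum_range_add_sum_Ico _ (show i + 1 ≤ i + k + 2 by omega)] at h0
    have h1 : ∑ l ∈ Finset.Ico (i + 1) (i + k + 2), s l * reciprocal q s (i + k + 1 - l)
        = ∑ m ∈ Finset.range (k + 1), s (i + m + 1) * reciprocal q s (k - m) := by
      rw [Finset.sum_Ico_eq_sum_range]
      apply Finset.sum_congr (by congr 1; omega)
      intro m hm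
      have hm' : m < k + 1 := Finset.mem_range.1 hm
      rw [show i + 1 + m = i + m + 1 by omega,
        show i + k + 1 - (i + m + 1) = k - m by omega]
    rw [h1] at h0
    exact eq_neg_of_add_eq_zero_right h0
  have E2 : ∀ i ≤ n, ∑ m ∈ Finset.range (n + 1), s (i + m + 1) * ω' m = 0 := by
    intro i hi
    have step1 : ∀ m, s (i + m + 1) * ω' m
        = ∑ k ∈ Finset.range (n + 1),
            (if m ≤ k then s (i + m + 1) * (reciprocal q s (k - m) * ω k) else 0) := by
      intro m
      simp only [hω'def, Finset.mul_sum, mul_ite, mul_zero]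
    rw [Finset.sum_congr rfl fun m _ => step1 m, Finset.sum_comm]
    have step2 : ∀ k ∈ Finset.range (n + 1),
        (∑ m ∈ Finset.range (n + 1),
            (if m ≤ k then s (i + m + 1) * (reciprocal q s (k - m) * ω k) else 0))
          = -∑ l ∈ Finset.range (i + 1),
              s l * (reciprocal q s ((i - l) + k + 1) * ω k) := by
      intro k hk
      rw [sum_if_le _ _ (Finset.mem_range.1 hk)]
      have hmm : ∑ m ∈ Finset.range (k + 1), s (i + m + 1) * (reciprocal q s (k - m) * ω k)
          = (∑ m ∈ Finset.range (k + 1), s (i + m + 1) * reciprocal q s (k - m)) * ω k := by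
        rw [Finset.sum_mul]
        exact Finset.sum_congr rfl fun m _ => (mul_assoc _ _ _).symm
      rw [hmm, convA i k, neg_mul, Finset.sum_mul]
      congr 1
      apply Finset.sum_congr rfl
      intro l hl
      have hl' : l < i + 1 := Finset.mem_range.1 hl
      rw [mul_assoc, show i + k + 1 - l = (i - l) + k + 1 by omega]
    rw [Finset.sum_congr rfl step2, Finset.sum_neg_distrib, neg_eq_zero, Finset.sum_comm]
    apply Finset.sum_eq_zero
    intro l hl
    have hl' : l < i + 1 := Finset.mem_range.1 hl
    rw [← Finset.mul_sum, E1 (i - l) (by omega), mul_zero]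
  have hω'0 : ∀ m ≤ n, ω' m = 0 := by
    have hKcol : Kmat q s n * bcol n ω' = 0 := by
      rw [Kmat_eq, bmat_mul_bcol, ← bcol_zero n]
      rw [bcol_eq_iff]
      intro j hj
      exact E2 j (by omega)
    have h3 : bcol n ω' = 0 := by
      calc bcol n ω' = (Kmat q s n)⁻¹ * (Kmat q s n * bcol n ω') := by
            rw [← Matrix.mul_assoc, Matrix.nonsing_inv_mul _ (detK hs n), Matrix.one_mul]
        _ = 0 := by rw [hKcol, Matrix.mul_zero]
    intro m hm
    rw [← bcol_zero n] at h3
    exact (bcol_eq_iff _ _ _).1 h3 m (by omega)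
  have sub : ∀ k ≤ n, (∀ l, k < l → l ≤ n → ω l = 0) → ω k = 0 := by
    intro k hk hl
    have h0 := hω'0 k hk
    simp only [hω'def] at h0
    rw [Finset.sum_eq_single k] at h0
    · rw [if_pos (le_refl k), Nat.sub_self, recip_zero] at h0
      calc ω k = (s 0 * (s 0)⁻¹) * ω k := by rw [hinv', one_mul]
        _ = s 0 * ((s 0)⁻¹ * ω k) := by rw [mul_assoc]
        _ = 0 := by rw [h0, mul_zero]
    · intro b hb hne
      by_cases hble : k ≤ b
      · rw [if_pos hble, hl b (by omega) (by have := Finset.mem_range.1 hb; omega), mul_zero]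
      · rw [if_neg hble]
    · intro hcon2
      exact absurd (Finset.mem_range.2 (by omega)) hcon2
  have hdown : ∀ d, ∀ k, k ≤ n → n - d ≤ k → ω k = 0 := by
    intro d
    induction d with
    | zero =>
        intro k hk hk2
        have hkn : k = n := by omega
        subst hkn
        exact sub k le_rfl (fun l hl1 hl2 => absurd hl1 (by omega))
    | succ d ih =>
        intro k hk hk2
        by_cases hc : n - d ≤ k
        · exact ih k hk hc
        · exact sub k hk (fun l hl1 hl2 => ih l hl2 (by omega))
  apply hw0
  have h5 : ω k0 = 0 := hdown n k0 hk0 (by omega)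
  calc w k0 = ((s 0)⁻¹ * s 0) * w k0 := by rw [hinv, one_mul]
    _ = (s 0)⁻¹ * ω k0 := by rw [mul_assoc, hωdef]
    _ = 0 := by rw [h5, mul_zero]

lemma detKt (hs : IsStieltjesPD q s) (n : ℕ) :
    IsUnit (Kmat q (katetov1 q s) n).det := by
  by_contra hcon
  have hcon' : ¬ IsUnit (bmat n (fun j k => katetov1 q s (j + k + 1))).det := hcon
  obtain ⟨w, ⟨k0, hk0, hw0⟩, hker⟩ := kernel_of_det n _ hcon'
  have hdet0 := detS0 hs
  have hinv : (s 0)⁻¹ * s 0 = 1 := Matrix.nonsing_inv_mul _ hdet0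
  have hinv' : s 0 * (s 0)⁻¹ = 1 := Matrix.mul_nonsing_inv _ hdet0
  set ω : ℕ → Mq q := fun k => s 0 * w k with hωdef
  have E1 : ∀ j ≤ n, ∑ k ∈ Finset.range (n + 1), reciprocal q s (j + k + 2) * ω k = 0 := by
    intro j hj
    have h0 := hker j hj
    have e2 : ∀ k, reciprocal q s (j + k + 2) * ω k
        = -(s 0)⁻¹ * (katetov1 q s (j + k + 1) * w k) := fun k =>
      (tred s hinv (j + k + 2) (w k)).symm
    rw [Finset.sum_congr rfl fun k _ => e2 k, ← Finset.mul_sum, h0, mul_zero]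
  set u : ℕ → Mq q :=
    fun j => ∑ k ∈ Finset.range (n + 1),
      if j ≤ k + 1 then reciprocal q s (k + 1 - j) * ω k else 0 with hudef
  have convB : ∀ i k : ℕ,
      ∑ m ∈ Finset.range (k + 2), s (i + m) * reciprocal q s (k + 1 - m)
        = -∑ l ∈ Finset.range i, s l * reciprocal q s (i + k + 1 - l) := by
    intro i k
    have h0 := conv_sr s hdet0 (i + k + 1)
    rw [if_neg (by omega)] at h0
    rw [← Finset.sum_range_add_sum_Ico _ (show i ≤ i + k + 2 by omega)] at h0
    have h1 : ∑ l ∈ Finset.Ico i (i + k + 2), s l * reciprocal q s (i + k + 1 - l)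
        = ∑ m ∈ Finset.range (k + 2), s (i + m) * reciprocal q s (k + 1 - m) := by
      rw [Finset.sum_Ico_eq_sum_range]
      apply Finset.sum_congr (by congr 1; omega)
      intro m hm
      have hm' : m < k + 2 := Finset.mem_range.1 hm
      rw [show i + k + 1 - (i + m) = k + 1 - m by omega]
    rw [h1] at h0
    exact eq_neg_of_add_eq_zero_right h0
  have E2 : ∀ i ≤ n + 1, ∑ j ∈ Finset.range (n + 2), s (i + j) * u j = 0 := by
    intro i hi
    have step1 : ∀ j, s (i + j) * u j
        = ∑ k ∈ Finset.range (n + 1),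
            (if j ≤ k + 1 then s (i + j) * (reciprocal q s (k + 1 - j) * ω k) else 0) := by
      intro j
      simp only [hudef, Finset.mul_sum, mul_ite, mul_zero]
    rw [Finset.sum_congr rfl fun j _ => step1 j, Finset.sum_comm]
    have step2 : ∀ k ∈ Finset.range (n + 1),
        (∑ j ∈ Finset.range (n + 2),
            (if j ≤ k + 1 then s (i + j) * (reciprocal q s (k + 1 - j) * ω k) else 0))
          = -∑ l ∈ Finset.range i,
              s l * (reciprocal q s ((i - 1 - l) + k + 2) * ω k) := by
      intro k hk
      have hkn : k < n + 1 := Finset.mem_range.1 hk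
      rw [sum_if_le _ _ (show k + 1 < n + 2 by omega)]
      have hmm : ∑ j ∈ Finset.range (k + 2), s (i + j) * (reciprocal q s (k + 1 - j) * ω k)
          = (∑ j ∈ Finset.range (k + 2), s (i + j) * reciprocal q s (k + 1 - j)) * ω k := by
        rw [Finset.sum_mul]
        exact Finset.sum_congr rfl fun m _ => (mul_assoc _ _ _).symm
      rw [hmm, convB i k, neg_mul, Finset.sum_mul]
      congr 1
      apply Finset.sum_congr rfl
      intro l hl
      have hl' : l < i := Finset.mem_range.1 hl
      rw [mul_assoc, show i + k + 1 - l = (i - 1 - l) + k + 2 by omega]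
    rw [Finset.sum_congr rfl step2, Finset.sum_neg_distrib, neg_eq_zero, Finset.sum_comm]
    apply Finset.sum_eq_zero
    intro l hl
    have hl' : l < i := Finset.mem_range.1 hl
    rw [← Finset.mul_sum, E1 (i - 1 - l) (by omega), mul_zero]
  have hu0 : ∀ m ≤ n + 1, u m = 0 := by
    have hHcol : Hmat q s (n + 1) * bcol (n + 1) u = 0 := by
      rw [Hmat_eq, bmat_mul_bcol, ← bcol_zero (n + 1)]
      rw [bcol_eq_iff]
      intro j hj
      exact E2 j (by omega)
    have h3 : bcol (n + 1) u = 0 := by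
      calc bcol (n + 1) u = (Hmat q s (n + 1))⁻¹ * (Hmat q s (n + 1) * bcol (n + 1) u) := by
            rw [← Matrix.mul_assoc, Matrix.nonsing_inv_mul _ (detH hs (n + 1)), Matrix.one_mul]
        _ = 0 := by rw [hHcol, Matrix.mul_zero]
    intro m hm
    rw [← bcol_zero (n + 1)] at h3
    exact (bcol_eq_iff _ _ _).1 h3 m (by omega)
  have sub : ∀ k ≤ n, (∀ l, k < l → l ≤ n → ω l = 0) → ω k = 0 := by
    intro k hk hl
    have h0 := hu0 (k + 1) (by omega)
    simp only [hudef] at h0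
    rw [Finset.sum_eq_single k] at h0
    · rw [if_pos (by omega : k + 1 ≤ k + 1), show k + 1 - (k + 1) = 0 by omega,
        recip_zero] at h0
      calc ω k = (s 0 * (s 0)⁻¹) * ω k := by rw [hinv', one_mul]
        _ = s 0 * ((s 0)⁻¹ * ω k) := by rw [mul_assoc]
        _ = 0 := by rw [h0, mul_zero]
    · intro b hb hne
      by_cases hble : k + 1 ≤ b + 1
      · rw [if_pos hble, hl b (by omega) (by have := Finset.mem_range.1 hb; omega), mul_zero]
      · rw [if_neg hble]
    · intro hcon2
      exact absurd (Finset.mem_range.2 (by omega)) hcon2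
  have hdown : ∀ d, ∀ k, k ≤ n → n - d ≤ k → ω k = 0 := by
    intro d
    induction d with
    | zero =>
        intro k hk hk2
        have hkn : k = n := by omega
        subst hkn
        exact sub k le_rfl (fun l hl1 hl2 => absurd hl1 (by omega))
    | succ d ih =>
        intro k hk hk2
        by_cases hc : n - d ≤ k
        · exact ih k hk hc
        · exact sub k hk (fun l hl1 hl2 => ih l hl2 (by omega))
  apply hw0
  have h5 : ω k0 = 0 := hdown n k0 hk0 (by omega)
  calc w k0 = ((s 0)⁻¹ * s 0) * w k0 := by rw [hinv, one_mul]
    _ = (s 0)⁻¹ * ω k0 := by rw [mul_assoc, hωdef]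
    _ = 0 := by rw [h5, mul_zero]

end Trans

section Claims
variable {q : ℕ} (s : ℕ → Mq q)

/-- Candidate coefficients for `cH` of the Kátětov transform. -/
def dseq (s : ℕ → Mq q) (N m : ℕ) : Mq q :=
  (s 0)⁻¹ * ∑ k ∈ Finset.range (N + 2), if m ≤ k then s (k - m) * cK s N k else 0

/-- Candidate coefficients for `cK` of the Kátětov transform. -/
def eseq (s : ℕ → Mq q) (N m : ℕ) : Mq q :=
  (s 0)⁻¹ * ∑ k ∈ Finset.range (N + 2), if m + 1 ≤ k then s (k - m - 1) * cH s N k else 0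

lemma dseq_Ico (N m : ℕ) :
    dseq s N m = (s 0)⁻¹ * ∑ l ∈ Finset.Ico m (N + 2), s (l - m) * cK s N l := by
  rw [dseq, sum_if_ge]

lemma eseq_Ico (N m : ℕ) :
    eseq s N m = (s 0)⁻¹ * ∑ l ∈ Finset.Ico (m + 1) (N + 2), s (l - m - 1) * cH s N l := by
  rw [eseq, sum_if_ge]

lemma dseq_top (hinv : (s 0)⁻¹ * s 0 = 1) (N : ℕ) : dseq s N (N + 1) = 1 := by
  rw [dseq_Ico, Nat.Ico_succ_singleton, Finset.sum_singleton, Nat.sub_self, cK_top,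
    mul_one, hinv]

lemma eseq_top (hinv : (s 0)⁻¹ * s 0 = 1) (N : ℕ) : eseq s N N = 1 := by
  rw [eseq_Ico, Nat.Ico_succ_singleton, Finset.sum_singleton,
    show N + 1 - N - 1 = 0 by omega, cH_top, mul_one, hinv]

lemma tred2 (hinv' : s 0 * (s 0)⁻¹ = 1) (m : ℕ) (A : Mq q) :
    (-(s 0) * reciprocal q s m * s 0) * ((s 0)⁻¹ * A) = -(s 0) * (reciprocal q s m * A) := by
  have h : (-(s 0) * reciprocal q s m * s 0) * ((s 0)⁻¹ * A)
      = -(s 0) * (reciprocal q s m * ((s 0 * (s 0)⁻¹) * A)) := by noncomm_ring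
  rw [h, hinv', one_mul]

/-- `∑_{i=1}^{a} s^♯_i s_{a-i} = δ_{a,0} − s_0⁻¹ s_a`. -/
lemma conv_head (hdet0 : IsUnit (s 0).det) (a : ℕ) :
    ∑ i ∈ Finset.Ico 1 (a + 1), reciprocal q s i * s (a - i)
      = (if a = 0 then 1 else 0) - (s 0)⁻¹ * s a := by
  have h0 := conv_rs s hdet0 a
  rw [← Finset.sum_range_add_sum_Ico _ (show 1 ≤ a + 1 by omega),
    Finset.sum_range_one, recip_zero, Nat.sub_zero] at h0
  exact eq_sub_of_add_eq' h0

/-- `∑_{k=0}^{l} s^♯_{j+k+1} s_{l-k} = −∑_{i=0}^{j} s^♯_i s_{j+l+1-i}`. -/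
lemma convC (hdet0 : IsUnit (s 0).det) (j l : ℕ) :
    ∑ k ∈ Finset.range (l + 1), reciprocal q s (j + k + 1) * s (l - k)
      = -∑ i ∈ Finset.range (j + 1), reciprocal q s i * s (j + l + 1 - i) := by
  have h0 := conv_rs s hdet0 (j + l + 1)
  rw [if_neg (by omega)] at h0
  rw [← Finset.sum_range_add_sum_Ico _ (show j + 1 ≤ j + l + 2 by omega)] at h0
  have h1 : ∑ i ∈ Finset.Ico (j + 1) (j + l + 2), reciprocal q s i * s (j + l + 1 - i)
      = ∑ k ∈ Finset.range (l + 1), reciprocal q s (j + k + 1) * s (l - k) := by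
    rw [Finset.sum_Ico_eq_sum_range]
    apply Finset.sum_congr (by congr 1; omega)
    intro k hk
    have hk' : k < l + 1 := Finset.mem_range.1 hk
    rw [show j + 1 + k = j + k + 1 by omega, show j + l + 1 - (j + k + 1) = l - k by omega]
  rw [h1] at h0
  exact eq_neg_of_add_eq_zero_right h0

/-- `∑_{k=0}^{l-1} s^♯_{j+k+2} s_{l-1-k} = −∑_{i=0}^{j+1} s^♯_i s_{j+l+1-i}`. -/
lemma convD (hdet0 : IsUnit (s 0).det) (j l : ℕ) :
    ∑ k ∈ Finset.range l, reciprocal q s (j + k + 2) * s (l - 1 - k)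
      = -∑ i ∈ Finset.range (j + 2), reciprocal q s i * s (j + l + 1 - i) := by
  have h0 := conv_rs s hdet0 (j + l + 1)
  rw [if_neg (by omega)] at h0
  rw [← Finset.sum_range_add_sum_Ico _ (show j + 2 ≤ j + l + 2 by omega)] at h0
  have h1 : ∑ i ∈ Finset.Ico (j + 2) (j + l + 2), reciprocal q s i * s (j + l + 1 - i)
      = ∑ k ∈ Finset.range l, reciprocal q s (j + k + 2) * s (l - 1 - k) := by
    rw [Finset.sum_Ico_eq_sum_range]
    apply Finset.sum_congr (by congr 1; omega)
    intro k hk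
    have hk' : k < l := Finset.mem_range.1 hk
    rw [show j + 2 + k = j + k + 2 by omega, show j + l + 1 - (j + k + 2) = l - 1 - k by omega]
  rw [h1] at h0
  exact eq_neg_of_add_eq_zero_right h0

lemma orthA (hs : IsStieltjesPD q s) (N : ℕ) :
    ∀ j ≤ N, ∑ k ∈ Finset.range (N + 2), katetov1 q s (j + k) * dseq s N k = 0 := by
  intro j hj
  have hdet0 := detS0 hs
  have hinv' : s 0 * (s 0)⁻¹ = 1 := Matrix.mul_nonsing_inv _ hdet0
  have step1 : ∀ k, katetov1 q s (j + k) * dseq s N k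
      = -(s 0) * (reciprocal q s (j + k + 1)
          * ∑ l ∈ Finset.Ico k (N + 2), s (l - k) * cK s N l) := by
    intro k
    rw [dseq_Ico, t_apply]
    exact tred2 s hinv' (j + k + 1) _
  rw [Finset.sum_congr rfl fun k _ => step1 k, ← Finset.mul_sum]
  have hz : ∑ k ∈ Finset.range (N + 2), reciprocal q s (j + k + 1)
      * ∑ l ∈ Finset.Ico k (N + 2), s (l - k) * cK s N l = 0 := by
    have e1 : ∀ k, reciprocal q s (j + k + 1)
        * ∑ l ∈ Finset.Ico k (N + 2), s (l - k) * cK s N l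
        = ∑ l ∈ Finset.Ico k (N + 2), reciprocal q s (j + k + 1) * (s (l - k) * cK s N l) :=
      fun k => Finset.mul_sum _ _ _
    rw [Finset.sum_congr rfl fun k _ => e1 k, Finset.range_eq_Ico,
      Finset.sum_Ico_Ico_comm 0 (N + 2)]
    have e3 : ∀ l ∈ Finset.Ico 0 (N + 2),
        (∑ k ∈ Finset.Ico 0 (l + 1), reciprocal q s (j + k + 1) * (s (l - k) * cK s N l))
          = -∑ i ∈ Finset.range (j + 1),
              reciprocal q s i * (s ((j - i) + l + 1) * cK s N l) := by
      intro l hl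
      have e2 : ∑ k ∈ Finset.Ico 0 (l + 1),
          reciprocal q s (j + k + 1) * (s (l - k) * cK s N l)
          = (∑ k ∈ Finset.range (l + 1), reciprocal q s (j + k + 1) * s (l - k)) * cK s N l := by
        rw [Finset.sum_mul, ← Finset.range_eq_Ico]
        exact Finset.sum_congr rfl fun k _ => (mul_assoc _ _ _).symm
      rw [e2, convC s hdet0 j l, neg_mul, Finset.sum_mul]
      congr 1
      apply Finset.sum_congr rfl
      intro i hi
      have hi' : i < j + 1 := Finset.mem_range.1 hi
      rw [mul_assoc, show j + l + 1 - i = (j - i) + l + 1 by omega]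
    rw [Finset.sum_congr rfl e3, Finset.sum_neg_distrib, neg_eq_zero, Finset.sum_comm]
    apply Finset.sum_eq_zero
    intro i hi
    rw [← Finset.mul_sum, ← Finset.range_eq_Ico, orthK s N (detK hs N) (j - i) (by omega),
      mul_zero]
  rw [hz, mul_zero]

lemma orthB (hs : IsStieltjesPD q s) (M : ℕ) :
    ∀ j ≤ M, ∑ k ∈ Finset.range (M + 2),
      katetov1 q s (j + k + 1) * eseq s (M + 1) k = 0 := by
  intro j hj
  set N := M + 1 with hN
  have hdet0 := detS0 hs
  have hinv' : s 0 * (s 0)⁻¹ = 1 := Matrix.mul_nonsing_inv _ hdet0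
  have step1 : ∀ k, katetov1 q s (j + k + 1) * eseq s N k
      = -(s 0) * (reciprocal q s (j + k + 2)
          * ∑ l ∈ Finset.Ico (k + 1) (N + 2), s (l - k - 1) * cH s N l) := by
    intro k
    rw [eseq_Ico, t_apply]
    exact tred2 s hinv' (j + k + 2) _
  rw [Finset.sum_congr rfl fun k _ => step1 k, ← Finset.mul_sum]
  have hz : ∑ k ∈ Finset.range (M + 2), reciprocal q s (j + k + 2)
      * ∑ l ∈ Finset.Ico (k + 1) (N + 2), s (l - k - 1) * cH s N l = 0 := by
    have e1 : ∀ k, reciprocal q s (j + k + 2)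
        * ∑ l ∈ Finset.Ico (k + 1) (N + 2), s (l - k - 1) * cH s N l
        = ∑ l ∈ Finset.Ico (k + 1) (N + 2),
            reciprocal q s (j + k + 2) * (s (l - k - 1) * cH s N l) :=
      fun k => Finset.mul_sum _ _ _
    rw [Finset.sum_congr rfl fun k _ => e1 k, Finset.range_eq_Ico,
      show M + 2 = N + 1 by omega]
    have ext1 : ∑ k ∈ Finset.Ico 0 (N + 1), ∑ l ∈ Finset.Ico (k + 1) (N + 2),
        reciprocal q s (j + k + 2) * (s (l - k - 1) * cH s N l)
        = ∑ k ∈ Finset.Ico 0 (N + 2), ∑ l ∈ Finset.Ico (k + 1) (N + 2),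
            reciprocal q s (j + k + 2) * (s (l - k - 1) * cH s N l) := by
      apply Finset.sum_subset (Finset.Ico_subset_Ico le_rfl (by omega))
      intro k hk hk2
      have : k = N + 1 := by
        simp only [Finset.mem_Ico] at hk hk2
        omega
      subst this
      rw [show Finset.Ico (N + 1 + 1) (N + 2) = ∅ by rw [Finset.Ico_self],
        Finset.sum_empty]
    rw [ext1, Finset.sum_Ico_Ico_comm' 0 (N + 2)]
    have e3 : ∀ l ∈ Finset.Ico 0 (N + 2),
        (∑ k ∈ Finset.Ico 0 l, reciprocal q s (j + k + 2) * (s (l - k - 1) * cH s N l))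
          = -∑ i ∈ Finset.range (j + 2),
              reciprocal q s i * (s ((j + 1 - i) + l) * cH s N l) := by
      intro l hl
      have e2 : ∑ k ∈ Finset.Ico 0 l, reciprocal q s (j + k + 2) * (s (l - k - 1) * cH s N l)
          = (∑ k ∈ Finset.range l, reciprocal q s (j + k + 2) * s (l - 1 - k)) * cH s N l := by
        rw [Finset.sum_mul, ← Finset.range_eq_Ico]
        apply Finset.sum_congr rfl
        intro k _
        rw [mul_assoc, show l - k - 1 = l - 1 - k by omega]
      rw [e2, convD s hdet0 j l, neg_mul, Finset.sum_mul]
      congr 1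
      apply Finset.sum_congr rfl
      intro i hi
      have hi' : i < j + 2 := Finset.mem_range.1 hi
      rw [mul_assoc, show j + l + 1 - i = (j + 1 - i) + l by omega]
    rw [Finset.sum_congr rfl e3, Finset.sum_neg_distrib, neg_eq_zero, Finset.sum_comm]
    apply Finset.sum_eq_zero
    intro i hi
    have hi' : i < j + 2 := Finset.mem_range.1 hi
    rw [← Finset.mul_sum, ← Finset.range_eq_Ico, orthH s N (detH hs N) (j + 1 - i) (by omega),
      mul_zero]
  rw [hz, mul_zero]

lemma claimA (hs : IsStieltjesPD q s) (N : ℕ) :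
    ∀ k < N + 2, cH (katetov1 q s) N k = dseq s N k := by
  have hinv : (s 0)⁻¹ * s 0 = 1 := Matrix.nonsing_inv_mul _ (detS0 hs)
  intro k hk
  exact (uniqH (katetov1 q s) N (detHt s hs N) (dseq s N) (orthA s hs N)
    (dseq_top s hinv N) k hk).symm

lemma claimB (hs : IsStieltjesPD q s) (M : ℕ) :
    ∀ k < M + 2, cK (katetov1 q s) M k = eseq s (M + 1) k := by
  have hinv : (s 0)⁻¹ * s 0 = 1 := Matrix.nonsing_inv_mul _ (detS0 hs)
  intro k hk
  refine (uniqK (katetov1 q s) M (detKt s hs M) (eseq s (M + 1)) ?_ ?_ k hk).symm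
  · exact orthB s hs M
  · exact eseq_top s hinv (M + 1)

end Claims

section Mains
variable {q : ℕ} (s : ℕ → Mq q)

lemma main2 (hs : IsStieltjesPD q s) (N m : ℕ) :
    ∑ k ∈ Finset.Ico (m + 1) (N + 2), katetov1 q s (k - m - 1) * dseq s N k
      = ∑ l ∈ Finset.Ico (m + 1) (N + 2), s (l - m) * cK s N l := by
  have hdet0 := detS0 hs
  have hinv' : s 0 * (s 0)⁻¹ = 1 := Matrix.mul_nonsing_inv _ hdet0
  have step1 : ∀ k ∈ Finset.Ico (m + 1) (N + 2), katetov1 q s (k - m - 1) * dseq s N k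
      = -(s 0) * (reciprocal q s (k - m)
          * ∑ l ∈ Finset.Ico k (N + 2), s (l - k) * cK s N l) := by
    intro k hk
    have hk' : m + 1 ≤ k := (Finset.mem_Ico.1 hk).1
    rw [dseq_Ico, t_apply, show k - m - 1 + 1 = k - m by omega]
    exact tred2 s hinv' (k - m) _
  rw [Finset.sum_congr rfl step1, ← Finset.mul_sum]
  have e1 : ∀ k, reciprocal q s (k - m)
      * ∑ l ∈ Finset.Ico k (N + 2), s (l - k) * cK s N l
      = ∑ l ∈ Finset.Ico k (N + 2), reciprocal q s (k - m) * (s (l - k) * cK s N l) :=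
    fun k => Finset.mul_sum _ _ _
  rw [Finset.sum_congr rfl fun k _ => e1 k, Finset.sum_Ico_Ico_comm (m + 1) (N + 2)]
  have e3 : ∀ l ∈ Finset.Ico (m + 1) (N + 2),
      (∑ k ∈ Finset.Ico (m + 1) (l + 1), reciprocal q s (k - m) * (s (l - k) * cK s N l))
        = -((s 0)⁻¹ * (s (l - m) * cK s N l)) := by
    intro l hl
    have hl' : m + 1 ≤ l := (Finset.mem_Ico.1 hl).1
    have e2 : ∑ k ∈ Finset.Ico (m + 1) (l + 1),
        reciprocal q s (k - m) * (s (l - k) * cK s N l)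
        = (∑ i ∈ Finset.Ico 1 (l - m + 1), reciprocal q s i * s (l - m - i)) * cK s N l := by
      rw [Finset.sum_mul, Finset.sum_Ico_eq_sum_range, Finset.sum_Ico_eq_sum_range]
      apply Finset.sum_congr (by congr 1 <;> omega)
      intro i hi
      have hi' : i < l - m := by
        have := Finset.mem_range.1 hi
        omega
      rw [mul_assoc, show m + 1 + i - m = 1 + i by omega, show l - (m + 1 + i) = l - m - (1 + i) by omega]
    rw [e2, conv_head s hdet0 (l - m), if_neg (by omega), zero_sub, neg_mul, mul_assoc]
  rw [Finset.sum_congr rfl e3, Finset.sum_neg_distrib, mul_neg, neg_mul, neg_neg,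
    Finset.mul_sum]
  apply Finset.sum_congr rfl
  intro l _
  rw [← mul_assoc, hinv', one_mul]

lemma main4 (hs : IsStieltjesPD q s) (N m : ℕ) (hm : m ≤ N + 1) :
    ∑ k ∈ Finset.Ico m (N + 1), katetov1 q s (k - m) * eseq s N k
      = ∑ l ∈ Finset.Ico (m + 1) (N + 2), s (l - m) * cH s N l := by
  have hdet0 := detS0 hs
  have hinv' : s 0 * (s 0)⁻¹ = 1 := Matrix.mul_nonsing_inv _ hdet0
  have step1 : ∀ k ∈ Finset.Ico m (N + 1), katetov1 q s (k - m) * eseq s N k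
      = -(s 0) * (reciprocal q s (k - m + 1)
          * ∑ l ∈ Finset.Ico (k + 1) (N + 2), s (l - k - 1) * cH s N l) := by
    intro k hk
    rw [eseq_Ico, t_apply]
    exact tred2 s hinv' (k - m + 1) _
  rw [Finset.sum_congr rfl step1, ← Finset.mul_sum]
  have e1 : ∀ k, reciprocal q s (k - m + 1)
      * ∑ l ∈ Finset.Ico (k + 1) (N + 2), s (l - k - 1) * cH s N l
      = ∑ l ∈ Finset.Ico (k + 1) (N + 2),
          reciprocal q s (k - m + 1) * (s (l - k - 1) * cH s N l) :=
    fun k => Finset.mul_sum _ _ _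
  rw [Finset.sum_congr rfl fun k _ => e1 k]
  have ext1 : ∑ k ∈ Finset.Ico m (N + 1), ∑ l ∈ Finset.Ico (k + 1) (N + 2),
      reciprocal q s (k - m + 1) * (s (l - k - 1) * cH s N l)
      = ∑ k ∈ Finset.Ico m (N + 2), ∑ l ∈ Finset.Ico (k + 1) (N + 2),
          reciprocal q s (k - m + 1) * (s (l - k - 1) * cH s N l) := by
    apply Finset.sum_subset (Finset.Ico_subset_Ico le_rfl (by omega))
    intro k hk hk2
    have hkeq : k = N + 1 := by
      simp only [Finset.mem_Ico] at hk hk2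
      omega
    subst hkeq
    rw [show Finset.Ico (N + 1 + 1) (N + 2) = ∅ by rw [Finset.Ico_self], Finset.sum_empty]
  rw [ext1, Finset.sum_Ico_Ico_comm' m (N + 2)]
  have e3 : ∀ l ∈ Finset.Ico m (N + 2),
      (∑ k ∈ Finset.Ico m l, reciprocal q s (k - m + 1) * (s (l - k - 1) * cH s N l))
        = ((if l - m = 0 then 1 else 0) - (s 0)⁻¹ * s (l - m)) * cH s N l := by
    intro l hl
    have hl' : m ≤ l := (Finset.mem_Ico.1 hl).1
    have e2 : ∑ k ∈ Finset.Ico m l, reciprocal q s (k - m + 1) * (s (l - k - 1) * cH s N l)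
        = (∑ i ∈ Finset.Ico 1 (l - m + 1), reciprocal q s i * s (l - m - i)) * cH s N l := by
      rw [Finset.sum_mul, Finset.sum_Ico_eq_sum_range, Finset.sum_Ico_eq_sum_range]
      apply Finset.sum_congr (by congr 1 <;> omega)
      intro i hi
      have hi' : i < l - m := by
        have h2 := Finset.mem_range.1 hi
        omega
      rw [mul_assoc, show m + i - m + 1 = 1 + i by omega,
        show l - (m + i) - 1 = l - m - (1 + i) by omega]
    rw [e2, conv_head s hdet0 (l - m)]
  rw [Finset.sum_congr rfl e3]
  have split : ∑ l ∈ Finset.Ico m (N + 2),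
      ((if l - m = 0 then 1 else 0) - (s 0)⁻¹ * s (l - m)) * cH s N l
      = cH s N m - ∑ l ∈ Finset.Ico m (N + 2), (s 0)⁻¹ * (s (l - m) * cH s N l) := by
    have e4 : ∀ l ∈ Finset.Ico m (N + 2),
        ((if l - m = 0 then 1 else 0) - (s 0)⁻¹ * s (l - m)) * cH s N l
        = (if l = m then cH s N m else 0) - (s 0)⁻¹ * (s (l - m) * cH s N l) := by
      intro l hl
      have hml := (Finset.mem_Ico.1 hl).1
      rw [sub_mul, mul_assoc]
      congr 1
      by_cases h : l = m
      · rw [if_pos (by omega), if_pos h, one_mul, h]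
      · rw [if_neg (by omega), if_neg h, zero_mul]
    rw [Finset.sum_congr rfl e4, Finset.sum_sub_distrib]
    congr 1
    rw [Finset.sum_ite_eq' (Finset.Ico m (N + 2)) m]
    rw [if_pos (Finset.mem_Ico.2 ⟨le_rfl, by omega⟩)]
  rw [split, mul_sub]
  have e5 : -(s 0) * ∑ l ∈ Finset.Ico m (N + 2), (s 0)⁻¹ * (s (l - m) * cH s N l)
      = -∑ l ∈ Finset.Ico m (N + 2), s (l - m) * cH s N l := by
    rw [neg_mul, Finset.mul_sum]
    congr 1
    apply Finset.sum_congr rfl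
    intro l _
    rw [← mul_assoc, hinv', one_mul]
  rw [e5]
  rw [Finset.sum_eq_sum_Ico_succ_bot (show m < N + 2 by omega), Nat.sub_self]
  rw [neg_mul, sub_neg_eq_add, neg_add_cancel_left]

end Mains

section Psum
variable {q : ℕ}

/-- Matrix polynomial from coefficients. -/
def psum (R : ℕ) (z : ℂ) (C : ℕ → Mq q) : Mq q := ∑ m ∈ Finset.range R, z ^ m • C m

lemma psum_ext (R : ℕ) (z : ℂ) {C D : ℕ → Mq q} (h : ∀ m < R, C m = D m) :
    psum R z C = psum R z D := by
  apply Finset.sum_congr rfl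
  intro m hm
  rw [h m (Finset.mem_range.1 hm)]

lemma psum_mul_left (R : ℕ) (z : ℂ) (A : Mq q) (C : ℕ → Mq q) :
    A * psum R z C = psum R z (fun m => A * C m) := by
  rw [psum, psum, Finset.mul_sum]
  exact Finset.sum_congr rfl fun m _ => mul_smul_comm _ _ _

lemma psum_sub (R : ℕ) (z : ℂ) (C D : ℕ → Mq q) :
    psum R z C - psum R z D = psum R z (fun m => C m - D m) := by
  rw [psum, psum, psum, ← Finset.sum_sub_distrib]
  exact Finset.sum_congr rfl fun m _ => (smul_sub _ _ _).symm

lemma psum_pad (R : ℕ) (z : ℂ) (C : ℕ → Mq q) (h : C R = 0) :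
    psum (R + 1) z C = psum R z C := by
  rw [psum, Finset.sum_range_succ, h, smul_zero, add_zero, psum]

lemma psum_shift (R : ℕ) (z : ℂ) (C : ℕ → Mq q) :
    z • psum R z C = psum (R + 1) z (fun m => if m = 0 then 0 else C (m - 1)) := by
  rw [psum, psum, Finset.smul_sum, Finset.sum_range_succ']
  have h0 : (z : ℂ) ^ 0 • (if (0 : ℕ) = 0 then (0 : Mq q) else C (0 - 1)) = 0 := by
    rw [if_pos rfl, smul_zero]
  rw [h0, add_zero]
  apply Finset.sum_congr rfl
  intro m _
  rw [if_neg (Nat.succ_ne_zero m), Nat.add_sub_cancel, smul_smul, ← pow_succ']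

lemma psum_eq_psum_of (R R' : ℕ) (z : ℂ) (C D : ℕ → Mq q) (hRR' : R ≤ R')
    (h1 : ∀ m < R, C m = D m) (h2 : ∀ m, R ≤ m → m < R' → D m = 0) :
    psum R z C = psum R' z D := by
  rw [psum, psum, ← Finset.sum_range_add_sum_Ico _ hRR']
  have hz : ∑ m ∈ Finset.Ico R R', z ^ m • D m = 0 :=
    Finset.sum_eq_zero fun m hm => by
      rw [h2 m (Finset.mem_Ico.1 hm).1 (Finset.mem_Ico.1 hm).2, smul_zero]
  rw [hz, add_zero]
  exact Finset.sum_congr rfl fun m hm => by rw [h1 m (Finset.mem_range.1 hm)]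

lemma tri (R : ℕ) (z : ℂ) (F : ℕ → ℕ → Mq q) :
    ∑ k ∈ Finset.range R, ∑ j ∈ Finset.range (k + 1), z ^ (k - j) • F j k
      = psum R z (fun m => ∑ k ∈ Finset.range R, if m ≤ k then F (k - m) k else 0) := by
  rw [psum]
  have hR : ∀ m, z ^ m • ∑ k ∈ Finset.range R, (if m ≤ k then F (k - m) k else 0)
      = ∑ k ∈ Finset.range R, (if m ≤ k then z ^ m • F (k - m) k else 0) := by
    intro m
    rw [Finset.smul_sum]
    exact Finset.sum_congr rfl fun k _ => by split_ifs <;> simp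
  rw [Finset.sum_congr rfl fun m _ => hR m, Finset.sum_comm]
  apply Finset.sum_congr rfl
  intro k hk
  rw [sum_if_le _ _ (Finset.mem_range.1 hk)]
  have hrefl := Finset.sum_range_reflect (fun m => z ^ m • F (k - m) k) (k + 1)
  rw [← hrefl]
  apply Finset.sum_congr rfl
  intro j hj
  have hj' : j < k + 1 := Finset.mem_range.1 hj
  rw [show k + 1 - 1 - j = k - j by omega, show k - (k - j) = j by omega]

lemma Ppoly_psum (s : ℕ → Mq q) (n : ℕ) (z : ℂ) :
    Ppoly q s (n + 1) z = psum (n + 2) z (cH s n) := Ppoly_eq s n z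

lemma Phat_psum (s : ℕ → Mq q) (n : ℕ) (z : ℂ) :
    Phat q s (n + 1) z = psum (n + 2) z (cK s n) := Phat_eq s n z

lemma cH_zero (s : ℕ → Mq q) (n j : ℕ) (h : n + 2 ≤ j) : cH s n j = 0 := by
  ext a b
  simp only [cH, Matrix.of_apply, dif_neg (by omega : ¬ j < n + 2)]
  rfl

end Psum

section Final
variable {q : ℕ} (s : ℕ → Mq q)

lemma final1 (hs : IsStieltjesPD q s) (N : ℕ) (z : ℂ) :
    Ppoly q (katetov1 q s) (N + 1) z = (s 0)⁻¹ * Qhat q s (N + 1) z := by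
  rw [Ppoly_psum, Qhat_eq s N z (herm_s hs), tri, psum_mul_left]
  apply psum_ext
  intro m hm
  rw [claimA s hs N m hm, dseq]

lemma final2 (hs : IsStieltjesPD q s) (N : ℕ) (z : ℂ) :
    Qpoly q (katetov1 q s) (N + 1) z = Qhat q s (N + 1) z - s 0 * Phat q s (N + 1) z := by
  have hherm := herm_s hs
  have hhermt := herm_t s (detS0 hs) hherm
  rw [Qpoly_eq (katetov1 q s) N z hhermt, tri, Qhat_eq s N z hherm, tri,
    Phat_psum, psum_mul_left, psum_sub]
  apply psum_ext
  intro m hm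
  have eL : ∀ k ∈ Finset.range (N + 2),
      (if m ≤ k then (if k - m = 0 then 0 else katetov1 q s (k - m - 1) * cH (katetov1 q s) N k)
        else 0)
      = (if m + 1 ≤ k then katetov1 q s (k - m - 1) * dseq s N k else 0) := by
    intro k hk
    have hk' := Finset.mem_range.1 hk
    by_cases h1 : m + 1 ≤ k
    · rw [if_pos (by omega), if_neg (by omega), if_pos h1, claimA s hs N k hk']
    · by_cases h2 : m ≤ k
      · rw [if_pos h2, if_pos (by omega), if_neg h1]
      · rw [if_neg h2, if_neg h1]
  rw [Finset.sum_congr rfl eL, sum_if_ge, main2 s hs N m, sum_if_ge,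
    Finset.sum_eq_sum_Ico_succ_bot (show m < N + 2 by omega), Nat.sub_self,
    add_sub_cancel_left]

lemma final3 (hs : IsStieltjesPD q s) (M : ℕ) (z : ℂ) :
    Phat q (katetov1 q s) (M + 1) z = (s 0)⁻¹ * Qpoly q s (M + 2) z := by
  have hherm := herm_s hs
  rw [Phat_psum, Qpoly_eq s (M + 1) z hherm, tri, psum_mul_left]
  apply psum_eq_psum_of (M + 2) (M + 1 + 2) z _ _ (by omega)
  · intro m hm
    rw [claimB s hs M m hm, eseq]
    congr 1
    apply Finset.sum_congr rfl
    intro k hk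
    have hk' := Finset.mem_range.1 hk
    by_cases h1 : m + 1 ≤ k
    · rw [if_pos h1, if_pos (by omega), if_neg (by omega)]
    · by_cases h2 : m ≤ k
      · rw [if_neg h1, if_pos h2, if_pos (by omega)]
      · rw [if_neg h1, if_neg h2]
  · intro m hm1 hm2
    show (s 0)⁻¹ * (∑ k ∈ Finset.range (M + 1 + 2),
      if m ≤ k then (if k - m = 0 then 0 else s (k - m - 1) * cH s (M + 1) k) else 0) = 0
    rw [Finset.sum_eq_zero, mul_zero]
    intro k hk
    have hk' := Finset.mem_range.1 hk
    by_cases h1 : m ≤ k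
    · rw [if_pos h1, if_pos (by omega)]
    · rw [if_neg h1]

lemma Wlemma (hs : IsStieltjesPD q s) (N m : ℕ) (hm : m ≤ N + 1) :
    ∑ l ∈ Finset.Ico (m + 1) (N + 2), s (l - m) * cH s N l
      = (if m = 0 then 0 else ∑ k ∈ Finset.range (N + 2),
          if m - 1 ≤ k then (if k - (m - 1) = 0 then 0
            else s (k - (m - 1) - 1) * cH s N k) else 0)
        - s 0 * cH s N m := by
  by_cases hm0 : m = 0
  · subst hm0
    rw [if_pos rfl, zero_sub]
    have h := orthH s N (detH hs N) 0 (by omega)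
    rw [Finset.range_eq_Ico, Finset.sum_eq_sum_Ico_succ_bot (show 0 < N + 2 by omega)] at h
    simp only [Nat.zero_add, Nat.add_zero, Nat.sub_zero] at h ⊢
    exact eq_neg_of_add_eq_zero_right h
  · rw [if_neg hm0]
    have merge : ∀ k ∈ Finset.range (N + 2),
        (if m - 1 ≤ k then (if k - (m - 1) = 0 then 0
          else s (k - (m - 1) - 1) * cH s N k) else 0)
        = (if m ≤ k then s (k - m) * cH s N k else 0) := by
      intro k _
      by_cases h1 : m ≤ k
      · rw [if_pos (by omega), if_neg (by omega), if_pos h1,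
          show k - (m - 1) - 1 = k - m by omega]
      · by_cases h2 : m - 1 ≤ k
        · rw [if_pos h2, if_pos (by omega), if_neg h1]
        · rw [if_neg h2, if_neg h1]
    rw [Finset.sum_congr rfl merge, sum_if_ge,
      Finset.sum_eq_sum_Ico_succ_bot (show m < N + 2 by omega), Nat.sub_self,
      add_sub_cancel_left]


lemma final4 (hs : IsStieltjesPD q s) (M : ℕ) (z : ℂ) :
    Qhat q (katetov1 q s) (M + 1) z
      = z • Qpoly q s (M + 2) z - s 0 * Ppoly q s (M + 2) z := by
  have hherm := herm_s hs
  have hhermt := herm_t s (detS0 hs) hherm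
  rw [Qhat_eq (katetov1 q s) M z hhermt, tri, Qpoly_eq s (M + 1) z hherm, tri, psum_shift,
    Ppoly_psum, psum_mul_left]
  rw [← psum_pad (M + 1 + 2) z (fun m => s 0 * cH s (M + 1) m)
      (by show s 0 * cH s (M + 1) (M + 1 + 2) = 0
          rw [cH_zero s (M + 1) (M + 1 + 2) (by omega), mul_zero])]
  rw [psum_sub]
  apply psum_eq_psum_of (M + 2) (M + 1 + 2 + 1) z _ _ (by omega)
  · intro m hm
    have eL : ∀ k ∈ Finset.range (M + 2),
        (if m ≤ k then katetov1 q s (k - m) * cK (katetov1 q s) M k else 0)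
        = (if m ≤ k then katetov1 q s (k - m) * eseq s (M + 1) k else 0) := by
      intro k hk
      rw [claimB s hs M k (Finset.mem_range.1 hk)]
    rw [Finset.sum_congr rfl eL, sum_if_ge,
      show Finset.Ico m (M + 2) = Finset.Ico m (M + 1 + 1) from rfl,
      main4 s hs (M + 1) m (by omega), Wlemma s hs (M + 1) m (by omega)]
  · intro m hm1 hm2
    have : m = M + 2 ∨ m = M + 1 + 2 := by omega
    rcases this with h | h <;> subst h
    · rw [← Wlemma s hs (M + 1) (M + 2) (by omega),
        Finset.Ico_eq_empty (by omega), Finset.sum_empty]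
    · rw [if_neg (by omega), cH_zero s (M + 1) (M + 1 + 2) (by omega), mul_zero, sub_zero]
      apply Finset.sum_eq_zero
      intro k hk
      have hk' := Finset.mem_range.1 hk
      by_cases h1 : M + 1 + 2 - 1 ≤ k
      · rw [if_pos h1, if_pos (by omega)]
      · rw [if_neg h1]

lemma t0 (hs : IsStieltjesPD q s) : katetov1 q s 0 = s 1 := by
  have hdet0 := detS0 hs
  have hinv : (s 0)⁻¹ * s 0 = 1 := Matrix.nonsing_inv_mul _ hdet0
  have hinv' : s 0 * (s 0)⁻¹ = 1 := Matrix.mul_nonsing_inv _ hdet0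
  rw [t_apply, recip_succ, Finset.sum_range_one, Nat.sub_zero, recip_zero]
  have h : -(s 0) * (-(s 0)⁻¹ * (s 1 * (s 0)⁻¹)) * s 0
      = (s 0 * (s 0)⁻¹) * (s 1 * ((s 0)⁻¹ * s 0)) := by noncomm_ring
  rw [h, hinv', hinv, one_mul, mul_one]

lemma Qpoly1 (hs : IsStieltjesPD q s) (z : ℂ) : Qpoly q s 1 z = s 0 := by
  have h1 : cH s 0 1 = 1 := cH_top s 0
  rw [Qpoly_eq s 0 z (herm_s hs)]
  simp [Finset.sum_range_succ, h1]

lemma cH00 (hs : IsStieltjesPD q s) : s 0 * cH s 0 0 = -(s 1) := by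
  have h := orthH s 0 (detH hs 0) 0 le_rfl
  have h1 : cH s 0 1 = 1 := cH_top s 0
  rw [Finset.sum_range_succ, Finset.sum_range_one, h1, mul_one] at h
  simp only [Nat.zero_add, Nat.add_zero] at h
  exact eq_neg_of_add_eq_zero_left h

lemma final3_zero (hs : IsStieltjesPD q s) (z : ℂ) : Phat q (katetov1 q s) 0 z = (s 0)⁻¹ * Qpoly q s 1 z := by
  have hinv : (s 0)⁻¹ * s 0 = 1 := Matrix.nonsing_inv_mul _ (detS0 hs)
  rw [Qpoly1 s hs z, hinv]
  rfl

lemma final4_zero (hs : IsStieltjesPD q s) (z : ℂ) :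
    Qhat q (katetov1 q s) 0 z = z • Qpoly q s 1 z - s 0 * Ppoly q s 1 z := by
  rw [Qpoly1 s hs z, Ppoly_eq s 0 z, Finset.sum_range_succ, Finset.sum_range_one,
    show Qhat q (katetov1 q s) 0 z = katetov1 q s 0 from rfl, t0 s hs,
    show cH s 0 1 = 1 from cH_top s 0]
  rw [pow_zero, one_smul, mul_add, cH00 s hs, pow_one, mul_smul_comm, mul_one]
  abel

end Final

end St18

/-- Relations between the polynomials of the first Kátětov transform and those of the
original sequence. -/
theorem stmt18 (q : ℕ) (hq : 1 ≤ q) (s : ℕ → Mq q) (hs : IsStieltjesPD q s) (n : ℕ) (hn : 1 ≤ n) (z : ℂ) :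
    Ppoly q (katetov q 1 s) n z = (s 0)⁻¹ * Qhat q s n z ∧
      Qpoly q (katetov q 1 s) n z = Qhat q s n z - s 0 * Phat q s n z ∧
      Phat q (katetov q 1 s) (n - 1) z = (s 0)⁻¹ * Qpoly q s n z ∧
      Qhat q (katetov q 1 s) (n - 1) z = z • Qpoly q s n z - s 0 * Ppoly q s n z := by
  rw [St18.katetov_one]
  obtain ⟨N, rfl⟩ : ∃ N, n = N + 1 := ⟨n - 1, by omega⟩
  rw [show N + 1 - 1 = N by omega]
  refine ⟨St18.final1 s hs N z, St18.final2 s hs N z, ?_, ?_⟩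
  · cases N with
    | zero => exact St18.final3_zero s hs z
    | succ M => exact St18.final3 s hs M z
  · cases N with
    | zero => exact St18.final4_zero s hs z
    | succ M => exact St18.final4 s hs M z

end
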